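/- arXiv:2105.14063 — 4 statements merged into one kernel-verified Lean document; each statement's English description precedes it below -/
import Mathlib

section
/- Let f be a locally integrable function on [0,T]×ℝ^d, let q ∈ [1,∞) with conjugate exponent q', and suppose there is a constant C ≥ 0 such that ∫_{[0,T]×ℝ^d} f(t,x) φ(t,x) dt dx ≤ C ‖φ‖_{L^{q'}([0,T]; L^∞(ℝ^d))} for every compactly supported bounded measurable φ : [0,T]×ℝ^d → ℝ. Then the function t ↦ ‖f(t,·)‖_{L^1(ℝ^d)} belongs to L^q([0,T]) with ‖ t ↦ ‖f(t,·)‖_{L^1} ‖_{L^q([0,T])} ≤ C. -/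
open MeasureTheory Filter Set
open scoped ENNReal NNReal Topology

lemma aux_iSup_min (x : ℝ≥0∞) : ⨆ m : ℕ, x ⊓ (m : ℝ≥0∞) = x := by
  apply le_antisymm (iSup_le fun m => inf_le_left)
  rcases eq_or_ne x ⊤ with hx | hx
  · subst hx
    simp only [top_inf_eq, ENNReal.iSup_natCast, le_refl]
  · obtain ⟨n, hn⟩ := ENNReal.exists_nat_gt hx
    exact le_iSup_of_le n (by simp [inf_eq_left.mpr hn.le])

lemma aux_iSup_rpow {p : ℝ} (hp : 0 < p) (a : ℕ → ℝ≥0∞) :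
    (⨆ m, a m) ^ p = ⨆ m, a m ^ p := by
  apply le_antisymm
  · have h : ⨆ m, a m ≤ (⨆ m, a m ^ p) ^ (1/p) := by
      refine iSup_le fun m => ?_
      have h2 : a m = (a m ^ p) ^ (1/p) := by
        rw [← ENNReal.rpow_mul, mul_one_div, div_self hp.ne', ENNReal.rpow_one]
      rw [h2]
      exact ENNReal.rpow_le_rpow (le_iSup (fun m => a m ^ p) m) (by positivity)
    calc (⨆ m, a m) ^ p ≤ ((⨆ m, a m ^ p) ^ (1/p)) ^ p :=
          ENNReal.rpow_le_rpow h hp.le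
      _ = ⨆ m, a m ^ p := by
          rw [← ENNReal.rpow_mul, one_div_mul_cancel hp.ne', ENNReal.rpow_one]
  · exact iSup_le fun m => ENNReal.rpow_le_rpow (le_iSup a m) hp.le

lemma aux_dual (μ : Measure ℝ) [IsFiniteMeasure μ] (pr : ℝ) (hpr : 1 < pr)
    (q' : ℝ≥0∞) (hq'0 : q' ≠ 0) (hq't : q' ≠ ⊤)
    (hconj : 1/pr + 1/q'.toReal = 1)
    (C : ℝ) (hC : 0 ≤ C) (G : ℝ → ℝ≥0∞) (hG : Measurable G)
    (key : ∀ ψ : ℝ → ℝ, Measurable ψ → (∀ t, 0 ≤ ψ t) → (∃ M, ∀ t, ψ t ≤ M) →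
      ∫⁻ t, G t * ENNReal.ofReal (ψ t) ∂μ ≤ ENNReal.ofReal C * eLpNorm ψ q' μ) :
    ∫⁻ t, G t ^ pr ∂μ ≤ ENNReal.ofReal C ^ pr := by
  set rr := q'.toReal with hrr
  have hpr0 : 0 < pr := lt_trans one_pos hpr
  have hrr0 : 0 < rr := ENNReal.toReal_pos hq'0 hq't
  have hprrr : (pr - 1) * rr = pr := by
    have h1 : 1/rr = 1 - 1/pr := by linarith
    have h2 : rr * (pr - 1) = pr := by
      field_simp at h1
      nlinarith [h1]
    linarith [h2]
  have hmain : ∀ m : ℕ, ∫⁻ t, (G t ⊓ (m:ℝ≥0∞)) ^ pr ∂μ ≤ ENNReal.ofReal C ^ pr := by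
    intro m
    set Gm : ℝ → ℝ≥0∞ := fun t => G t ⊓ (m:ℝ≥0∞) with hGm
    have hGmm : Measurable Gm := hG.inf measurable_const
    have hGmtop : ∀ t, Gm t ≠ ⊤ := fun t =>
      ne_top_of_le_ne_top (ENNReal.natCast_ne_top m) inf_le_right
    set ψ : ℝ → ℝ := fun t => (Gm t).toReal ^ (pr - 1) with hψ
    have hψm : Measurable ψ := (hGmm.ennreal_toReal).pow_const _ |>.comp measurable_id |>.mono le_rfl le_rfl
    have hψ0 : ∀ t, 0 ≤ ψ t := fun t => Real.rpow_nonneg ENNReal.toReal_nonneg _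
    have hψb : ∃ M, ∀ t, ψ t ≤ M := by
      refine ⟨(m:ℝ) ^ (pr - 1), fun t => ?_⟩
      exact Real.rpow_le_rpow ENNReal.toReal_nonneg
        (by simpa using ENNReal.toReal_mono (ENNReal.natCast_ne_top m) inf_le_right)
        (by linarith)
    have hofReal : ∀ t, ENNReal.ofReal (ψ t) = Gm t ^ (pr - 1) := by
      intro t
      show ENNReal.ofReal ((Gm t).toReal ^ (pr - 1)) = Gm t ^ (pr - 1)
      rw [← ENNReal.ofReal_rpow_of_nonneg ENNReal.toReal_nonneg (by linarith),
        ENNReal.ofReal_toReal (hGmtop t)]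
    have hkey := key ψ hψm hψ0 hψb
    set Am := ∫⁻ t, Gm t ^ pr ∂μ with hAm
    have hLHS : Am ≤ ∫⁻ t, G t * ENNReal.ofReal (ψ t) ∂μ := by
      apply lintegral_mono
      intro t
      dsimp only
      rw [hofReal t]
      rcases eq_or_ne (Gm t) 0 with h0 | h0
      · rw [h0, ENNReal.zero_rpow_of_pos hpr0]; exact zero_le
      · calc Gm t ^ pr = Gm t ^ (1 + (pr - 1)) := by norm_num
          _ = Gm t * Gm t ^ (pr - 1) := by
              rw [ENNReal.rpow_add _ _ h0 (hGmtop t), ENNReal.rpow_one]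
          _ ≤ G t * Gm t ^ (pr - 1) := mul_le_mul_left inf_le_left _
    have hRHS : eLpNorm ψ q' μ = Am ^ (1/rr) := by
      rw [eLpNorm_eq_lintegral_rpow_enorm_toReal hq'0 hq't, ← hrr]
      congr 1
      apply lintegral_congr
      intro t
      rw [← ofReal_norm, Real.norm_eq_abs, abs_of_nonneg (hψ0 t),
        hofReal t, ← ENNReal.rpow_mul, hprrr]
    have hAmtop : Am ≠ ⊤ := by
      have : Am ≤ ∫⁻ _, ((m:ℝ≥0∞)) ^ pr ∂μ :=
        lintegral_mono fun t => ENNReal.rpow_le_rpow inf_le_right hpr0.le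
      rw [lintegral_const] at this
      exact ne_top_of_le_ne_top (ENNReal.mul_ne_top
        (ENNReal.rpow_ne_top_of_nonneg hpr0.le (ENNReal.natCast_ne_top m))
        (measure_ne_top μ _)) this
    rcases eq_or_ne Am 0 with h0 | h0
    · rw [h0]; exact zero_le
    · have hcancel : Am ^ (1/pr) ≤ ENNReal.ofReal C := by
        have hsplit : Am = Am ^ (1/pr) * Am ^ (1/rr) := by
          rw [← ENNReal.rpow_add _ _ h0 hAmtop, hconj, ENNReal.rpow_one]
        have hineq : Am ^ (1/pr) * Am ^ (1/rr) ≤ ENNReal.ofReal C * Am ^ (1/rr) := by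
          rw [← hsplit]
          calc Am ≤ _ := hLHS.trans hkey
            _ = ENNReal.ofReal C * Am ^ (1/rr) := by rw [hRHS]
        have hy0 : Am ^ (1/rr) ≠ 0 := by
          simp only [ne_eq, ENNReal.rpow_eq_zero_iff, not_or]
          constructor
          · rintro ⟨h, _⟩; exact h0 h
          · rintro ⟨h, _⟩; exact hAmtop h
        have hyt : Am ^ (1/rr) ≠ ⊤ := ENNReal.rpow_ne_top_of_nonneg (by positivity) hAmtop
        exact (ENNReal.mul_le_mul_iff_left hy0 hyt).mp hineq
      calc Am = (Am ^ (1/pr)) ^ pr := by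
            rw [← ENNReal.rpow_mul, one_div_mul_cancel hpr0.ne', ENNReal.rpow_one]
        _ ≤ ENNReal.ofReal C ^ pr := ENNReal.rpow_le_rpow hcancel hpr0.le
  have hptw : ∀ t, G t ^ pr = ⨆ m : ℕ, (G t ⊓ (m:ℝ≥0∞)) ^ pr := by
    intro t
    rw [← aux_iSup_rpow hpr0, aux_iSup_min]
  calc ∫⁻ t, G t ^ pr ∂μ = ∫⁻ t, ⨆ m : ℕ, (G t ⊓ (m:ℝ≥0∞)) ^ pr ∂μ :=
        lintegral_congr hptw
    _ = ⨆ m : ℕ, ∫⁻ t, (G t ⊓ (m:ℝ≥0∞)) ^ pr ∂μ := by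
        apply lintegral_iSup
        · exact fun m => (hG.inf measurable_const).pow_const _
        · intro i j hij t
          exact ENNReal.rpow_le_rpow (inf_le_inf le_rfl (by exact_mod_cast hij)) hpr0.le
    _ ≤ ENNReal.ofReal C ^ pr := iSup_le hmain

/-- Duality lemma: if `∫∫ f φ ≤ C ‖φ‖_{L^{q'}_T L^∞_x}` for all bounded measurable
compactly supported `φ`, then `t ↦ ‖f(t,·)‖_{L^1}` is in `L^q([0,T])` with norm `≤ C`. -/
theorem stmt_0 (d : ℕ) (T : ℝ) (hT : 0 < T) (q q' : ℝ≥0∞)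
    (hq1 : 1 ≤ q) (hqtop : q ≠ ⊤) (hconj : 1 / q + 1 / q' = 1)
    (C : ℝ) (hC : 0 ≤ C)
    (f : ℝ → (Fin d → ℝ) → ℝ)
    (hf : LocallyIntegrable (fun z : ℝ × (Fin d → ℝ) => f z.1 z.2)
      ((volume.restrict (Set.Icc 0 T)).prod volume))
    (hbound : ∀ φ : ℝ → (Fin d → ℝ) → ℝ,
      Measurable (fun z : ℝ × (Fin d → ℝ) => φ z.1 z.2) →
      (∃ M, ∀ t x, |φ t x| ≤ M) →
      HasCompactSupport (fun z : ℝ × (Fin d → ℝ) => φ z.1 z.2) →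
      ∫ t in Set.Icc 0 T, ∫ x, f t x * φ t x ≤
        C * (eLpNorm (fun t => (eLpNorm (φ t) ⊤ volume).toReal) q'
              (volume.restrict (Set.Icc 0 T))).toReal) :
    eLpNorm (fun t => ∫ x, |f t x|) q (volume.restrict (Set.Icc 0 T))
      ≤ ENNReal.ofReal C := by
  set μ : Measure ℝ := volume.restrict (Set.Icc 0 T) with hμ
  haveI : IsFiniteMeasure μ := by
    constructor
    rw [hμ, Measure.restrict_apply_univ]
    exact isCompact_Icc.measure_lt_top
  have hμ0 : μ ≠ 0 := by
    rw [← Measure.measure_univ_ne_zero, hμ, Measure.restrict_apply_univ, Real.volume_Icc]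
    simp only [ne_eq, ENNReal.ofReal_eq_zero, not_le]
    linarith
  obtain ⟨g, hgsm, hfg⟩ := hf.aestronglyMeasurable
  have hgm : Measurable g := hgsm.measurable
  have hq0 : q ≠ 0 := (zero_lt_one.trans_le hq1).ne'
  set pr : ℝ := q.toReal with hprdef
  have hpr0 : 0 < pr := ENNReal.toReal_pos hq0 hqtop
  -- the truncated L¹ₓ norms
  set Bn : ℕ → Set (Fin d → ℝ) := fun n => Metric.closedBall 0 n with hBn
  set Gn : ℕ → ℝ → ℝ≥0∞ :=
    fun n t => ∫⁻ x, (‖g (t, x)‖₊ : ℝ≥0∞) * (Bn n).indicator 1 x with hGn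
  have hBmeas : ∀ n, MeasurableSet (Bn n) := fun n => measurableSet_closedBall
  have hGnmeas : ∀ n, Measurable (Gn n) := by
    intro n
    apply Measurable.lintegral_prod_right (f := fun t x => (‖g (t, x)‖₊ : ℝ≥0∞) * (Bn n).indicator 1 x)
    exact hgm.nnnorm.coe_nnreal_ennreal.mul ((measurable_const.indicator (hBmeas n)).comp measurable_snd)
  -- indicator rewriting
  have hind : ∀ (s : Set (Fin d → ℝ)) (k : (Fin d → ℝ) → ℝ≥0∞) (x),
      k x * s.indicator 1 x = s.indicator k x := by
    intro s k x
    by_cases h : x ∈ s <;> simp [h]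
  have hGnset : ∀ n t, Gn n t = ∫⁻ x in Bn n, (‖g (t, x)‖₊ : ℝ≥0∞) := by
    intro n t
    simp only [hGn]
    rw [lintegral_congr (fun x => hind (Bn n) (fun y => (‖g (t, y)‖₊ : ℝ≥0∞)) x), lintegral_indicator (hBmeas n)]
  -- key estimate from the hypothesis
  have key_A : ∀ (n : ℕ) (ψ : ℝ → ℝ), Measurable ψ → (∀ t, 0 ≤ ψ t) →
      (∃ M, ∀ t, ψ t ≤ M) →
      ∫⁻ t, Gn n t * ENNReal.ofReal (ψ t) ∂μ ≤ ENNReal.ofReal C * eLpNorm ψ q' μ := by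
    intro n ψ hψm hψ0 hψb
    obtain ⟨M, hM⟩ := hψb
    set φ : ℝ → (Fin d → ℝ) → ℝ := fun t x =>
      ((Set.Icc (0:ℝ) T).indicator 1 t) * ψ t * ((Bn n).indicator 1 x) *
        (if 0 ≤ g (t, x) then (1:ℝ) else -1) with hφ
    have habs : ∀ t x, |φ t x| ≤ ψ t := by
      intro t x
      have h1 : |((Set.Icc (0:ℝ) T).indicator (1 : ℝ → ℝ) t)| ≤ 1 := by
        by_cases h : t ∈ Set.Icc (0:ℝ) T <;> simp [h]
      have h3 : |((Bn n).indicator (1 : (Fin d → ℝ) → ℝ) x)| ≤ 1 := by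
        by_cases h : x ∈ Bn n <;> simp [h]
      have h4 : |(if 0 ≤ g (t, x) then (1:ℝ) else -1)| ≤ 1 := by
        split <;> norm_num
      calc |φ t x| = |((Set.Icc (0:ℝ) T).indicator (1 : ℝ → ℝ) t)| * |ψ t|
            * |((Bn n).indicator (1 : (Fin d → ℝ) → ℝ) x)|
            * |(if 0 ≤ g (t, x) then (1:ℝ) else -1)| := by
            simp only [hφ]; rw [abs_mul, abs_mul, abs_mul]
        _ ≤ 1 * |ψ t| * 1 * 1 := by gcongr
        _ = ψ t := by rw [abs_of_nonneg (hψ0 t)]; ring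
    have hφm : Measurable (fun z : ℝ × (Fin d → ℝ) => φ z.1 z.2) := by
      apply Measurable.mul
      apply Measurable.mul
      apply Measurable.mul
      · exact (measurable_const.indicator measurableSet_Icc).comp measurable_fst
      · exact hψm.comp measurable_fst
      · exact (measurable_const.indicator (hBmeas n)).comp measurable_snd
      · exact Measurable.ite (measurableSet_le measurable_const hgm)
          measurable_const measurable_const
    have hφb : ∃ M', ∀ t x, |φ t x| ≤ M' := ⟨M, fun t x => (habs t x).trans (hM t)⟩
    have hφcs : HasCompactSupport (fun z : ℝ × (Fin d → ℝ) => φ z.1 z.2) := by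
      apply HasCompactSupport.intro (isCompact_Icc.prod (isCompact_closedBall 0 n))
      intro z hz
      rw [Set.mem_prod] at hz
      push_neg at hz
      by_cases h1 : z.1 ∈ Set.Icc (0:ℝ) T
      · have h2 : z.2 ∉ Bn n := hz h1
        simp [hφ, Set.indicator_of_notMem h2]
      · simp [hφ, Set.indicator_of_notMem h1]
    have hb := hbound φ hφm hφb hφcs
    -- integrability of g on the slab
    have hK : IntegrableOn (fun z : ℝ × (Fin d → ℝ) => f z.1 z.2)
        (Set.Icc 0 T ×ˢ Bn n) (μ.prod volume) :=
      hf.integrableOn_isCompact (isCompact_Icc.prod (isCompact_closedBall 0 n))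
    have hKg : IntegrableOn g (Set.Icc 0 T ×ˢ Bn n) (μ.prod volume) :=
      hK.congr (ae_restrict_of_ae hfg)
    have hmeq : (μ.prod volume).restrict ((Set.Icc (0:ℝ) T) ×ˢ Bn n)
        = μ.prod (volume.restrict (Bn n)) := by
      rw [← Measure.prod_restrict]
      congr 1
      rw [hμ, Measure.restrict_restrict measurableSet_Icc, Set.inter_self]
    have hintg : Integrable g (μ.prod (volume.restrict (Bn n))) := by
      rw [IntegrableOn, hmeq] at hKg
      exact hKg
    have hfin : ∫⁻ t, Gn n t ∂μ ≠ ⊤ := by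
      have h2 : ∫⁻ t, Gn n t ∂μ = ∫⁻ z, (‖g z‖₊ : ℝ≥0∞) ∂(μ.prod (volume.restrict (Bn n))) := by
        rw [lintegral_prod _ hgm.nnnorm.coe_nnreal_ennreal.aemeasurable]
        exact lintegral_congr fun t => by rw [hGnset n t]
      rw [h2]
      exact hintg.2.ne
    have hGfinae : ∀ᵐ t ∂μ, Gn n t < ⊤ := ae_lt_top (hGnmeas n) hfin
    have hslice : ∀ᵐ t ∂μ, Integrable (fun x => g (t, x)) (volume.restrict (Bn n)) :=
      hintg.prod_right_ae
    have hmem : ∀ᵐ t ∂μ, t ∈ Set.Icc (0:ℝ) T := ae_restrict_mem measurableSet_Icc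
    have haef : ∀ᵐ t ∂μ, (fun x => f t x) =ᵐ[volume] fun x => g (t, x) :=
      Measure.ae_ae_of_ae_prod hfg
    have hinner : ∀ᵐ t ∂μ, ∫ x, f t x * φ t x = ψ t * (Gn n t).toReal := by
      filter_upwards [hmem, haef, hslice, hGfinae] with t ht hfg' hint' hfin'
      have step1 : ∫ x, f t x * φ t x = ∫ x, g (t, x) * φ t x :=
        integral_congr_ae (hfg'.mono fun x hx => by show f t x * φ t x = g (t, x) * φ t x; have hx' : f t x = g (t, x) := hx; rw [hx'])
      have step2 : ∀ x, g (t, x) * φ t x = ψ t * (Bn n).indicator (fun x => |g (t, x)|) x := by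
        intro x
        simp only [hφ]
        rw [Set.indicator_of_mem ht]
        by_cases hx : x ∈ Bn n
        · rw [Set.indicator_of_mem hx, Set.indicator_of_mem hx]
          simp only [Pi.one_apply]
          by_cases hg0 : 0 ≤ g (t, x)
          · rw [if_pos hg0, abs_of_nonneg hg0]; ring
          · rw [if_neg hg0, abs_of_neg (lt_of_not_ge hg0)]; ring
        · rw [Set.indicator_of_notMem hx, Set.indicator_of_notMem hx]
          ring
      have step3 : ∫ x, g (t, x) * φ t x = ψ t * ∫ x, (Bn n).indicator (fun x => |g (t, x)|) x := by
        rw [integral_congr_ae (Eventually.of_forall step2), integral_const_mul]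
      have step4 : ∫ x, (Bn n).indicator (fun x => |g (t, x)|) x = (Gn n t).toReal := by
        rw [integral_indicator (hBmeas n)]
        have hmeas' : AEStronglyMeasurable (fun x => |g (t, x)|) (volume.restrict (Bn n)) :=
          ((hgm.comp measurable_prodMk_left).abs).aestronglyMeasurable
        rw [integral_eq_lintegral_of_nonneg_ae (Eventually.of_forall fun x => abs_nonneg _) hmeas']
        rw [hGnset n t]
        congr 1
        exact lintegral_congr fun x => (Real.enorm_eq_ofReal_abs _).symm
      rw [step1, step3, step4]
    have houter : ∫ t, (∫ x, f t x * φ t x) ∂μ = ∫ t, ψ t * (Gn n t).toReal ∂μ :=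
      integral_congr_ae hinner
    have hintGn : Integrable (fun t => (Gn n t).toReal) μ :=
      integrable_toReal_of_lintegral_ne_top (hGnmeas n).aemeasurable hfin
    have hintprod : Integrable (fun t => ψ t * (Gn n t).toReal) μ := by
      apply Integrable.mono' (hintGn.const_mul M)
        ((hψm.mul (hGnmeas n).ennreal_toReal).aestronglyMeasurable)
      filter_upwards with t
      rw [Real.norm_eq_abs, Pi.mul_apply, abs_mul, abs_of_nonneg (hψ0 t), abs_of_nonneg ENNReal.toReal_nonneg]
      exact mul_le_mul_of_nonneg_right (hM t) ENNReal.toReal_nonneg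
    have hlin : ∫⁻ t, Gn n t * ENNReal.ofReal (ψ t) ∂μ
        = ENNReal.ofReal (∫ t, ψ t * (Gn n t).toReal ∂μ) := by
      rw [ofReal_integral_eq_lintegral_ofReal hintprod
        (Eventually.of_forall fun t => mul_nonneg (hψ0 t) ENNReal.toReal_nonneg)]
      apply lintegral_congr_ae
      filter_upwards [hGfinae] with t hfin'
      rw [ENNReal.ofReal_mul (hψ0 t), ENNReal.ofReal_toReal hfin'.ne, mul_comm]
    -- bound the eLpNorm of Φ by that of ψ
    have hΦle : ∀ t, (eLpNorm (φ t) ⊤ volume).toReal ≤ ψ t := by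
      intro t
      apply ENNReal.toReal_le_of_le_ofReal (hψ0 t)
      rw [eLpNorm_exponent_top]
      exact eLpNormEssSup_le_of_ae_bound (Eventually.of_forall fun x => by
        rw [Real.norm_eq_abs]; exact habs t x)
    have hmono : eLpNorm (fun t => (eLpNorm (φ t) ⊤ volume).toReal) q' μ ≤ eLpNorm ψ q' μ := by
      apply eLpNorm_mono
      intro t
      rw [Real.norm_eq_abs, Real.norm_eq_abs, abs_of_nonneg ENNReal.toReal_nonneg,
        abs_of_nonneg (hψ0 t)]
      exact hΦle t
    calc ∫⁻ t, Gn n t * ENNReal.ofReal (ψ t) ∂μ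
        = ENNReal.ofReal (∫ t, ψ t * (Gn n t).toReal ∂μ) := hlin
      _ = ENNReal.ofReal (∫ t, (∫ x, f t x * φ t x) ∂μ) := by rw [houter]
      _ ≤ ENNReal.ofReal (C * (eLpNorm (fun t => (eLpNorm (φ t) ⊤ volume).toReal) q' μ).toReal) :=
          ENNReal.ofReal_le_ofReal hb
      _ = ENNReal.ofReal C *
          ENNReal.ofReal ((eLpNorm (fun t => (eLpNorm (φ t) ⊤ volume).toReal) q' μ).toReal) :=
          ENNReal.ofReal_mul hC
      _ ≤ ENNReal.ofReal C * eLpNorm ψ q' μ := by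
          apply mul_le_mul_right
          exact le_trans ENNReal.ofReal_toReal_le hmono
  -- per-n bound  ∫⁻ (Gn n)^pr ≤ (ofReal C)^pr
  have hB : ∀ n, ∫⁻ t, Gn n t ^ pr ∂μ ≤ ENNReal.ofReal C ^ pr := by
    intro n
    by_cases hq : q = 1
    · have hpr1 : pr = 1 := by rw [hprdef, hq, ENNReal.toReal_one]
      have hq'top : q' = ⊤ := by
        rw [hq] at hconj
        have h1 : (1:ℝ≥0∞)/1 = 1 := by norm_num
        rw [h1] at hconj
        have h2 : 1/q' = 0 :=
          (ENNReal.add_right_inj (a := (1:ℝ≥0∞)) (by norm_num)).mp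
            (by rw [add_zero]; exact hconj)
        rcases (ENNReal.div_eq_zero_iff).mp h2 with h | h
        · norm_num at h
        · exact h
      have hk := key_A n (fun _ => 1) measurable_const (fun _ => zero_le_one) ⟨1, fun _ => le_refl 1⟩
      rw [hq'top, eLpNorm_exponent_top, eLpNormEssSup_const _ hμ0] at hk
      simp only [ENNReal.ofReal_one, mul_one, nnnorm_one, ENNReal.coe_one] at hk
      simpa [hpr1] using hk
    · have hq1' : 1 < q := lt_of_le_of_ne hq1 (Ne.symm hq)
      have hq'0 : q' ≠ 0 := by
        intro h
        rw [h] at hconj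
        simp [ENNReal.div_zero] at hconj
      have hq't : q' ≠ ⊤ := by
        intro h
        rw [h] at hconj
        simp only [one_div, ENNReal.inv_top, add_zero] at hconj
        exact hq (ENNReal.inv_eq_one.mp hconj)
      have hpr1 : 1 < pr := by
        rw [hprdef]
        have := (ENNReal.toReal_lt_toReal (by norm_num : (1:ℝ≥0∞) ≠ ⊤) hqtop).mpr hq1'
        simpa using this
      have hconjr : 1/pr + 1/q'.toReal = 1 := by
        have h1 : (1/q).toReal + (1/q').toReal = 1 := by
          rw [← ENNReal.toReal_add (by simp [hq0]) (by simp [hq'0])]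
          rw [hconj, ENNReal.toReal_one]
        rw [ENNReal.toReal_div, ENNReal.toReal_div, ENNReal.toReal_one] at h1
        exact h1
      exact aux_dual μ pr hpr1 q' hq'0 hq't hconjr C hC (Gn n) (hGnmeas n) (key_A n)
  -- conclusion
  rw [eLpNorm_eq_lintegral_rpow_enorm_toReal hq0 hqtop, ← hprdef]
  have hfinal : ∫⁻ t, (‖∫ x, |f t x|‖₊ : ℝ≥0∞) ^ pr ∂μ ≤ ENNReal.ofReal C ^ pr := by
    set Glim : ℝ → ℝ≥0∞ := fun t => ∫⁻ x, (‖g (t, x)‖₊ : ℝ≥0∞) with hGlim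
    have hGsup : ∀ t, ⨆ n, Gn n t = Glim t := by
      intro t
      rw [hGlim]
      rw [← lintegral_iSup]
      · apply lintegral_congr
        intro x
        apply le_antisymm
        · exact iSup_le fun n => by
            calc (‖g (t, x)‖₊ : ℝ≥0∞) * (Bn n).indicator 1 x
                ≤ (‖g (t, x)‖₊ : ℝ≥0∞) * 1 := by
                  apply mul_le_mul_right
                  by_cases h : x ∈ Bn n <;> simp [h]
              _ = _ := mul_one _
        · obtain ⟨n, hn⟩ := exists_nat_ge ‖x‖
          refine le_iSup_of_le n ?_
          have hx : x ∈ Bn n := by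
            rw [hBn]
            simp only [Metric.mem_closedBall, dist_zero_right]
            exact hn
          rw [Set.indicator_of_mem hx]
          simp
      · exact fun n => (hgm.comp measurable_prodMk_left).nnnorm.coe_nnreal_ennreal.mul
          (measurable_const.indicator (hBmeas n))
      · intro i j hij x
        apply mul_le_mul_right
        apply Set.indicator_le_indicator_of_subset
        · rw [hBn]
          exact Metric.closedBall_subset_closedBall (by exact_mod_cast hij)
        · intro x; simp
    have haefae : ∀ᵐ t ∂μ, (fun x => f t x) =ᵐ[volume] fun x => g (t, x) :=
      Measure.ae_ae_of_ae_prod hfg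
    have hptle : ∀ᵐ t ∂μ, (‖∫ x, |f t x|‖₊ : ℝ≥0∞) ≤ Glim t := by
      filter_upwards [haefae] with t hfg'
      by_cases hi : Integrable (fun x => |f t x|) volume
      · have h1 : (‖∫ x, |f t x|‖₊ : ℝ≥0∞) = ENNReal.ofReal (∫ x, |f t x|) := by
          rw [← enorm_eq_nnnorm, ← ofReal_norm, Real.norm_eq_abs,
            abs_of_nonneg (integral_nonneg fun x => abs_nonneg _)]
        rw [h1, ofReal_integral_eq_lintegral_ofReal hi
          (Eventually.of_forall fun x => abs_nonneg _)]
        rw [hGlim]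
        apply le_of_eq
        apply lintegral_congr_ae
        filter_upwards [hfg'] with x hx
        rw [hx, ← enorm_eq_nnnorm, Real.enorm_eq_ofReal_abs]
      · rw [integral_undef hi]
        simp
    calc ∫⁻ t, (‖∫ x, |f t x|‖₊ : ℝ≥0∞) ^ pr ∂μ
        ≤ ∫⁻ t, Glim t ^ pr ∂μ :=
          lintegral_mono_ae (hptle.mono fun t ht => ENNReal.rpow_le_rpow ht hpr0.le)
      _ = ∫⁻ t, ⨆ n, Gn n t ^ pr ∂μ := by
          apply lintegral_congr
          intro t
          rw [← aux_iSup_rpow hpr0, hGsup t]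
      _ = ⨆ n, ∫⁻ t, Gn n t ^ pr ∂μ := by
          apply lintegral_iSup
          · exact fun n => (hGnmeas n).pow_const _
          · intro i j hij t
            apply ENNReal.rpow_le_rpow _ hpr0.le
            apply lintegral_mono
            intro x
            apply mul_le_mul_right
            apply Set.indicator_le_indicator_of_subset
            · rw [hBn]
              exact Metric.closedBall_subset_closedBall (by exact_mod_cast hij)
            · intro x; simp
      _ ≤ ENNReal.ofReal C ^ pr := iSup_le hB
  calc (∫⁻ t, (‖∫ x, |f t x|‖₊ : ℝ≥0∞) ^ pr ∂μ) ^ (1/pr)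
      ≤ (ENNReal.ofReal C ^ pr) ^ (1/pr) := ENNReal.rpow_le_rpow hfinal (by positivity)
    _ = ENNReal.ofReal C := by
        rw [← ENNReal.rpow_mul, mul_one_div, div_self hpr0.ne', ENNReal.rpow_one]
end

section
/- Let b ∈ L^p(ℝ^d) with p ∈ [1,∞), and let (μ^n) be a sequence of Borel probability measures on ℝ^d converging weakly to a probability measure μ. Then the convolutions b∗μ^n converge to b∗μ in L^p(ℝ^d), i.e. lim_{n→∞} ‖b∗μ^n − b∗μ‖_{L^p} = 0. -/
open MeasureTheory Filter Set Metric
open scoped ENNReal NNReal Topology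

lemma aux_jensen {α : Type*} [MeasurableSpace α] (m : Measure α) {p : ℝ} (hp : 1 ≤ p)
    {g w : α → ℝ≥0∞} (hg : AEMeasurable g m) (hw : AEMeasurable w m) :
    (∫⁻ y, g y * w y ∂m) ^ p ≤ (∫⁻ y, (g y) ^ p * w y ∂m) * (∫⁻ y, w y ∂m) ^ (p - 1) := by
  rcases eq_or_lt_of_le hp with h1 | h1
  · simp [← h1]
  have hpq : p.HolderConjugate p.conjExponent := Real.HolderConjugate.conjExponent h1
  set q := p.conjExponent with hqdef
  have hp0 : (0:ℝ) < p := hpq.pos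
  have hq0 : (0:ℝ) < q := hpq.symm.pos
  have key : ∫⁻ y, g y * w y ∂m ≤
      (∫⁻ y, (g y) ^ p * w y ∂m) ^ (1/p) * (∫⁻ y, w y ∂m) ^ (1/q) := by
    have h := ENNReal.lintegral_mul_le_Lp_mul_Lq m hpq
      (f := fun y => g y * (w y) ^ (1/p)) (g := fun y => (w y) ^ (1/q))
      (hg.mul (hw.pow_const _)) (hw.pow_const _)
    calc ∫⁻ y, g y * w y ∂m
        = ∫⁻ y, (g y * (w y) ^ (1/p)) * (w y) ^ (1/q) ∂m := by
          apply lintegral_congr fun y => ?_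
          rw [mul_assoc, ← ENNReal.rpow_add_of_nonneg _ _ (by positivity) (by positivity),
            one_div, one_div, hpq.inv_add_inv_eq_one, ENNReal.rpow_one]
      _ ≤ (∫⁻ y, (g y * (w y) ^ (1/p)) ^ p ∂m) ^ (1/p) *
          (∫⁻ y, ((w y) ^ (1/q)) ^ q ∂m) ^ (1/q) := h
      _ = (∫⁻ y, (g y) ^ p * w y ∂m) ^ (1/p) * (∫⁻ y, w y ∂m) ^ (1/q) := by
          congr 1
          · congr 1; apply lintegral_congr fun y => ?_
            rw [ENNReal.mul_rpow_of_nonneg _ _ hp0.le, ← ENNReal.rpow_mul,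
              one_div_mul_cancel hp0.ne', ENNReal.rpow_one]
          · congr 1; apply lintegral_congr fun y => ?_
            rw [← ENNReal.rpow_mul, one_div_mul_cancel hq0.ne', ENNReal.rpow_one]
  calc (∫⁻ y, g y * w y ∂m) ^ p
      ≤ ((∫⁻ y, (g y) ^ p * w y ∂m) ^ (1/p) * (∫⁻ y, w y ∂m) ^ (1/q)) ^ p :=
        ENNReal.rpow_le_rpow key hp0.le
    _ = (∫⁻ y, (g y) ^ p * w y ∂m) * (∫⁻ y, w y ∂m) ^ (p - 1) := by
        rw [ENNReal.mul_rpow_of_nonneg _ _ hp0.le, ← ENNReal.rpow_mul, ← ENNReal.rpow_mul,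
          one_div_mul_cancel hp0.ne', ENNReal.rpow_one]
        congr 2
        rw [one_div, inv_mul_eq_div, hqdef, Real.conjExponent]
        field_simp


lemma aux_conv_bound {d : ℕ} {p : ℝ} (hp1 : 1 ≤ p) {f : (Fin d → ℝ) → ℝ} (hf : Measurable f)
    {w : (Fin d → ℝ) → ℝ≥0∞} (hwm : Measurable w)
    (m : Measure (Fin d → ℝ)) [IsFiniteMeasure m] {δ : ℝ≥0∞}
    (hδ : ∫⁻ y, w y ∂m ≤ δ) (hδ1 : δ ≤ 1)
    {F : (Fin d → ℝ) → ℝ}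
    (hF : ∀ x, (‖F x‖₊ : ℝ≥0∞) ≤ ∫⁻ y, (‖f (x - y)‖₊ : ℝ≥0∞) * w y ∂m) :
    eLpNorm F (ENNReal.ofReal p) volume ≤ δ * eLpNorm f (ENNReal.ofReal p) volume := by
  have hp0 : (0:ℝ) < p := lt_of_lt_of_le one_pos hp1
  have hq0 : ENNReal.ofReal p ≠ 0 := by simpa [ENNReal.ofReal_eq_zero] using hp0
  have hqt : ENNReal.ofReal p ≠ ∞ := ENNReal.ofReal_ne_top
  have htr : (ENNReal.ofReal p).toReal = p := ENNReal.toReal_ofReal hp0.le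
  rw [eLpNorm_eq_lintegral_rpow_enorm_toReal hq0 hqt, eLpNorm_eq_lintegral_rpow_enorm_toReal hq0 hqt, htr]
  set N : ℝ≥0∞ := ∫⁻ x, (‖f x‖₊ : ℝ≥0∞) ^ p ∂(volume : Measure (Fin d → ℝ)) with hN
  have hprod : Measurable (fun z : (Fin d → ℝ) × (Fin d → ℝ) =>
      ((‖f (z.1 - z.2)‖₊ : ℝ≥0∞) ^ p) * w z.2) :=
    (((hf.comp (measurable_fst.sub measurable_snd)).enorm).pow_const p).mul
      (hwm.comp measurable_snd)
  have step1 : ∀ x, (‖F x‖₊ : ℝ≥0∞) ^ p ≤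
      (∫⁻ y, (‖f (x - y)‖₊ : ℝ≥0∞) ^ p * w y ∂m) * δ ^ (p - 1) := by
    intro x
    calc (‖F x‖₊ : ℝ≥0∞) ^ p ≤ (∫⁻ y, (‖f (x - y)‖₊ : ℝ≥0∞) * w y ∂m) ^ p :=
          ENNReal.rpow_le_rpow (hF x) hp0.le
      _ ≤ (∫⁻ y, (‖f (x - y)‖₊ : ℝ≥0∞) ^ p * w y ∂m) * (∫⁻ y, w y ∂m) ^ (p - 1) :=
          aux_jensen m hp1 ((hf.comp (measurable_const.sub measurable_id)).enorm).aemeasurable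
            hwm.aemeasurable
      _ ≤ (∫⁻ y, (‖f (x - y)‖₊ : ℝ≥0∞) ^ p * w y ∂m) * δ ^ (p - 1) := by
          exact mul_le_mul_right (ENNReal.rpow_le_rpow hδ (by linarith)) _
  have swap : ∫⁻ x, (∫⁻ y, (‖f (x - y)‖₊ : ℝ≥0∞) ^ p * w y ∂m)
        ∂(volume : Measure (Fin d → ℝ)) = N * ∫⁻ y, w y ∂m := by
    rw [lintegral_lintegral_swap hprod.aemeasurable]
    have : ∀ y, ∫⁻ x, (‖f (x - y)‖₊ : ℝ≥0∞) ^ p * w y ∂(volume : Measure (Fin d → ℝ))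
        = N * w y := by
      intro y
      have m1 : Measurable fun x : Fin d → ℝ => (‖f (x - y)‖₊ : ℝ≥0∞) ^ p := by
        exact ((hf.comp (measurable_id.sub measurable_const)).enorm).pow_const p
      rw [lintegral_mul_const _ m1]
      congr 1
      exact lintegral_sub_right_eq_self (fun x => (‖f x‖₊ : ℝ≥0∞) ^ p) y
    simp_rw [this]
    rw [lintegral_const_mul _ hwm]
  calc (∫⁻ x, (‖F x‖₊ : ℝ≥0∞) ^ p ∂(volume : Measure (Fin d → ℝ))) ^ (1/p)
      ≤ (∫⁻ x, (∫⁻ y, (‖f (x - y)‖₊ : ℝ≥0∞) ^ p * w y ∂m) * δ ^ (p - 1)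
          ∂(volume : Measure (Fin d → ℝ))) ^ (1/p) := by
        apply ENNReal.rpow_le_rpow _ (by positivity)
        exact lintegral_mono step1
    _ = ((N * ∫⁻ y, w y ∂m) * δ ^ (p - 1)) ^ (1/p) := by
        rw [lintegral_mul_const' _ _ (by
          exact ENNReal.rpow_ne_top_of_nonneg (by linarith) (lt_of_le_of_lt hδ1 ENNReal.one_lt_top).ne),
          swap]
    _ ≤ (N * δ ^ p) ^ (1/p) := by
        apply ENNReal.rpow_le_rpow _ (by positivity)
        calc N * (∫⁻ y, w y ∂m) * δ ^ (p - 1) ≤ N * δ * δ ^ (p - 1) := by gcongr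
          _ = N * δ ^ p := by
              rw [mul_assoc]
              congr 1
              have h2 : δ ^ ((1:ℝ) + (p-1)) = δ ^ (1:ℝ) * δ ^ (p-1) :=
                ENNReal.rpow_add_of_nonneg _ _ zero_le_one (by linarith)
              rw [ENNReal.rpow_one] at h2
              rw [← h2]
              norm_num
    _ = δ * N ^ (1/p) := by
        rw [ENNReal.mul_rpow_of_nonneg _ _ (by positivity), ← ENNReal.rpow_mul,
          mul_one_div_cancel hp0.ne', ENNReal.rpow_one, mul_comm]


lemma aux_ae_slice {d : ℕ} (m : Measure (Fin d → ℝ)) [IsProbabilityMeasure m]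
    {b b' : (Fin d → ℝ) → ℝ} (h : b =ᵐ[volume] b') :
    ∀ᵐ x ∂(volume : Measure (Fin d → ℝ)), (fun y => b (x - y)) =ᵐ[m] (fun y => b' (x - y)) := by
  have T := measurePreserving_sub_prod (volume : Measure (Fin d → ℝ)) m
  have Tfst : MeasurePreserving Prod.fst ((volume : Measure (Fin d → ℝ)).prod m) volume :=
    ⟨measurable_fst, by simp [Measure.map_fst_prod, measure_univ]⟩
  have φmp := Tfst.comp T
  have h2 := φmp.quasiMeasurePreserving.ae (h : ∀ᵐ z ∂(volume : Measure (Fin d → ℝ)), b z = b' z)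
  exact Measure.ae_ae_of_ae_prod h2

lemma aux_ae_integrable {d : ℕ} {p : ℝ} (hp1 : 1 ≤ p) {b : (Fin d → ℝ) → ℝ}
    (hbm : Measurable b) (hb : eLpNorm b (ENNReal.ofReal p) volume ≠ ∞)
    (m : Measure (Fin d → ℝ)) [IsProbabilityMeasure m] :
    ∀ᵐ x ∂(volume : Measure (Fin d → ℝ)), Integrable (fun y => b (x - y)) m := by
  have hp0 : (0:ℝ) < p := lt_of_lt_of_le one_pos hp1
  have hq0 : ENNReal.ofReal p ≠ 0 := by simpa [ENNReal.ofReal_eq_zero] using hp0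
  have hqt : ENNReal.ofReal p ≠ ∞ := ENNReal.ofReal_ne_top
  have htr : (ENNReal.ofReal p).toReal = p := ENNReal.toReal_ofReal hp0.le
  set N : ℝ≥0∞ := ∫⁻ x, (‖b x‖₊ : ℝ≥0∞) ^ p ∂(volume : Measure (Fin d → ℝ)) with hN
  have hNfin : N ≠ ∞ := by
    rw [eLpNorm_eq_lintegral_rpow_enorm_toReal hq0 hqt, htr] at hb
    change N ^ (1 / p) ≠ ∞ at hb
    intro hcon
    rw [hcon] at hb
    simp [ENNReal.top_rpow_of_pos (by positivity : (0:ℝ) < 1/p)] at hb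
    linarith
  have hprod : Measurable (fun z : (Fin d → ℝ) × (Fin d → ℝ) =>
      ((‖b (z.1 - z.2)‖₊ : ℝ≥0∞) ^ p)) :=
    ((hbm.comp (measurable_fst.sub measurable_snd)).enorm).pow_const p
  have hJ : ∫⁻ x, (∫⁻ y, (‖b (x - y)‖₊ : ℝ≥0∞) ^ p ∂m)
      ∂(volume : Measure (Fin d → ℝ)) = N := by
    rw [lintegral_lintegral_swap hprod.aemeasurable]
    have : ∀ y, ∫⁻ x, (‖b (x - y)‖₊ : ℝ≥0∞) ^ p ∂(volume : Measure (Fin d → ℝ)) = N :=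
      fun y => lintegral_sub_right_eq_self (fun x => (‖b x‖₊ : ℝ≥0∞) ^ p) y
    simp_rw [this]
    simp [measure_univ]
  have hmeas : Measurable fun x => ∫⁻ y, (‖b (x - y)‖₊ : ℝ≥0∞) ^ p ∂m :=
    Measurable.lintegral_prod_right' hprod
  have hfin : ∀ᵐ x ∂(volume : Measure (Fin d → ℝ)),
      (∫⁻ y, (‖b (x - y)‖₊ : ℝ≥0∞) ^ p ∂m) < ∞ :=
    ae_lt_top hmeas (hJ ▸ hNfin)
  filter_upwards [hfin] with x hx
  have hmem : MemLp (fun y => b (x - y)) (ENNReal.ofReal p) m := by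
    refine ⟨(hbm.comp (measurable_const.sub measurable_id)).aestronglyMeasurable, ?_⟩
    rw [eLpNorm_eq_lintegral_rpow_enorm_toReal hq0 hqt, htr]
    exact ENNReal.rpow_lt_top_of_nonneg (by positivity) hx.ne
  exact hmem.integrable (by simpa [ENNReal.ofReal_one] using ENNReal.ofReal_le_ofReal hp1)


lemma aux_main_term {d : ℕ} {p : ℝ} (hp1 : 1 ≤ p)
    {c χ : (Fin d → ℝ) → ℝ} (hc : Continuous c) (hcs : HasCompactSupport c)
    (hχ : Continuous χ) (hχs : HasCompactSupport χ) (hχ01 : ∀ y, χ y ∈ Icc (0:ℝ) 1)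
    (μ : ℕ → Measure (Fin d → ℝ)) (ν : Measure (Fin d → ℝ))
    (hμ : ∀ n, IsProbabilityMeasure (μ n)) (hν : IsProbabilityMeasure ν)
    (hweak : ∀ g : BoundedContinuousFunction (Fin d → ℝ) ℝ,
      Tendsto (fun n => ∫ x, g x ∂(μ n)) atTop (𝓝 (∫ x, g x ∂ν))) :
    Tendsto (fun n => eLpNorm
        (fun x => (∫ y, c (x - y) * χ y ∂(μ n)) - ∫ y, c (x - y) * χ y ∂ν)
        (ENNReal.ofReal p) volume) atTop (𝓝 0) := by
  have hp0 : (0:ℝ) < p := lt_of_lt_of_le one_pos hp1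
  have hq0 : ENNReal.ofReal p ≠ 0 := by simpa [ENNReal.ofReal_eq_zero] using hp0
  have hqt : ENNReal.ofReal p ≠ ∞ := ENNReal.ofReal_ne_top
  have htr : (ENNReal.ofReal p).toReal = p := ENNReal.toReal_ofReal hp0.le
  obtain ⟨Cc, hCc⟩ := hcs.exists_bound_of_continuous hc
  have hCc0 : 0 ≤ Cc := le_trans (norm_nonneg _) (hCc 0)
  obtain ⟨Rc, hRc⟩ := hcs.isBounded.subset_closedBall (0 : Fin d → ℝ)
  obtain ⟨Rχ, hRχ⟩ := hχs.isBounded.subset_closedBall (0 : Fin d → ℝ)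
  have hint_bound : ∀ x : Fin d → ℝ, ∀ y : Fin d → ℝ, ‖c (x - y) * χ y‖ ≤ Cc := by
    intro x y
    rw [norm_mul]
    calc ‖c (x - y)‖ * ‖χ y‖ ≤ Cc * 1 := by
          apply mul_le_mul (hCc _) _ (norm_nonneg _) hCc0
          rw [Real.norm_eq_abs, abs_le]
          constructor <;> [linarith [(hχ01 y).1]; exact (hχ01 y).2]
      _ = Cc := mul_one Cc
  have hcont : ∀ (m : Measure (Fin d → ℝ)), IsProbabilityMeasure m →
      Continuous fun x => ∫ y, c (x - y) * χ y ∂m := by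
    intro m hm
    apply continuous_of_dominated (bound := fun _ => Cc)
    · exact fun x => ((hc.comp (continuous_const.sub continuous_id)).mul hχ).aestronglyMeasurable
    · exact fun x => Eventually.of_forall fun y => hint_bound x y
    · exact integrable_const _
    · exact Eventually.of_forall fun y =>
        (hc.comp (continuous_id.sub continuous_const)).mul continuous_const
  have hvanish : ∀ (m : Measure (Fin d → ℝ)), ∀ x : Fin d → ℝ,
      x ∉ closedBall (0 : Fin d → ℝ) (Rc + Rχ) → (∫ y, c (x - y) * χ y ∂m) = 0 := by
    intro m x hx
    have : ∀ y : Fin d → ℝ, c (x - y) * χ y = 0 := by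
      intro y
      rcases eq_or_ne (χ y) 0 with h | h
      · rw [h, mul_zero]
      · have hy : y ∈ closedBall (0 : Fin d → ℝ) Rχ :=
          hRχ (subset_tsupport χ h)
        have hxy : x - y ∉ tsupport c := by
          intro hmem
          have h1 : ‖x - y‖ ≤ Rc := by
            simpa [dist_zero_right] using hRc hmem
          have h2 : ‖y‖ ≤ Rχ := by simpa [dist_zero_right] using hy
          have h3 : ‖x‖ ≤ Rc + Rχ := by
            calc ‖x‖ = ‖(x - y) + y‖ := by ring_nf
              _ ≤ ‖x - y‖ + ‖y‖ := norm_add_le _ _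
              _ ≤ Rc + Rχ := by linarith
          exact hx (by simpa [dist_zero_right] using h3)
        rw [image_eq_zero_of_notMem_tsupport hxy, zero_mul]
    simp only [this, integral_zero]
  have hpt : ∀ x : Fin d → ℝ, Tendsto (fun n => ∫ y, c (x - y) * χ y ∂(μ n)) atTop
      (𝓝 (∫ y, c (x - y) * χ y ∂ν)) := by
    intro x
    exact hweak (BoundedContinuousFunction.ofNormedAddCommGroup (fun y => c (x - y) * χ y)
      ((hc.comp (continuous_const.sub continuous_id)).mul hχ) Cc (hint_bound x))
  have hFbound : ∀ (m : Measure (Fin d → ℝ)), IsProbabilityMeasure m → ∀ x : Fin d → ℝ,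
      ‖∫ y, c (x - y) * χ y ∂m‖ ≤ Cc := by
    intro m hm x
    calc ‖∫ y, c (x - y) * χ y ∂m‖ ≤ ∫ y, Cc ∂m :=
          norm_integral_le_of_norm_le (integrable_const _)
            (Eventually.of_forall fun y => hint_bound x y)
      _ = Cc := by simp [measure_univ]
  -- dominated convergence for the lintegrals
  set S := closedBall (0 : Fin d → ℝ) (Rc + Rχ) with hS
  set bound : (Fin d → ℝ) → ℝ≥0∞ :=
    S.indicator (fun _ => (ENNReal.ofReal (2 * Cc)) ^ p) with hbound
  have hA : Tendsto (fun n => ∫⁻ x, (‖(∫ y, c (x - y) * χ y ∂(μ n)) -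
      ∫ y, c (x - y) * χ y ∂ν‖₊ : ℝ≥0∞) ^ p ∂(volume : Measure (Fin d → ℝ))) atTop
      (𝓝 (∫⁻ _x, (0:ℝ≥0∞) ∂(volume : Measure (Fin d → ℝ)))) := by
    apply tendsto_lintegral_of_dominated_convergence bound
    · intro n
      exact (((hcont (μ n) (hμ n)).sub (hcont ν hν)).measurable.enorm).pow_const p
    · intro n
      apply Eventually.of_forall
      intro x
      by_cases hx : x ∈ S
      · have h1 : ‖(∫ y, c (x - y) * χ y ∂(μ n)) - ∫ y, c (x - y) * χ y ∂ν‖ ≤ 2 * Cc := by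
          calc ‖(∫ y, c (x - y) * χ y ∂(μ n)) - ∫ y, c (x - y) * χ y ∂ν‖
              ≤ ‖∫ y, c (x - y) * χ y ∂(μ n)‖ + ‖∫ y, c (x - y) * χ y ∂ν‖ := norm_sub_le _ _
            _ ≤ 2 * Cc := by linarith [hFbound (μ n) (hμ n) x, hFbound ν hν x]
        rw [hbound, indicator_of_mem hx]
        apply ENNReal.rpow_le_rpow _ hp0.le
        rw [← enorm_eq_nnnorm, ← ofReal_norm_eq_enorm]
        exact ENNReal.ofReal_le_ofReal h1
      · simp only [hvanish (μ n) x hx, hvanish ν x hx, hbound, indicator_of_notMem hx]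
        simp [ENNReal.zero_rpow_of_pos hp0]
    · simp only [hbound]
      rw [lintegral_indicator measurableSet_closedBall, setLIntegral_const]
      exact (ENNReal.mul_lt_top
        (ENNReal.rpow_lt_top_of_nonneg hp0.le ENNReal.ofReal_ne_top)
        (measure_closedBall_lt_top)).ne
    · apply Eventually.of_forall
      intro x
      have h0 : Tendsto (fun n => (∫ y, c (x - y) * χ y ∂(μ n)) -
          ∫ y, c (x - y) * χ y ∂ν) atTop (𝓝 0) := by
        have hconst : Tendsto (fun _ : ℕ => ∫ y, c (x - y) * χ y ∂ν) atTop
            (𝓝 (∫ y, c (x - y) * χ y ∂ν)) := tendsto_const_nhds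
        have h0' := (hpt x).sub hconst
        rw [sub_self] at h0'
        exact h0'
      have h1 := (ENNReal.continuous_rpow_const (y := p)).tendsto
        ((0:ℝ≥0∞))
      have h2 : Tendsto (fun n => (‖(∫ y, c (x - y) * χ y ∂(μ n)) -
          ∫ y, c (x - y) * χ y ∂ν‖₊ : ℝ≥0∞)) atTop (𝓝 0) := by
        rw [← ENNReal.coe_zero]
        exact ENNReal.tendsto_coe.2 (by simpa using h0.nnnorm)
      have := h1.comp h2
      simpa [Function.comp_def, ENNReal.zero_rpow_of_pos hp0] using this
  rw [lintegral_zero] at hA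
  have heq : (fun n => eLpNorm
      (fun x => (∫ y, c (x - y) * χ y ∂(μ n)) - ∫ y, c (x - y) * χ y ∂ν)
      (ENNReal.ofReal p) volume) = fun n => (∫⁻ x, (‖(∫ y, c (x - y) * χ y ∂(μ n)) -
      ∫ y, c (x - y) * χ y ∂ν‖₊ : ℝ≥0∞) ^ p ∂(volume : Measure (Fin d → ℝ))) ^ (1/p) := by
    funext n
    rw [eLpNorm_eq_lintegral_rpow_enorm_toReal hq0 hqt, htr]
    rfl
  rw [heq]
  have h1 := (ENNReal.continuous_rpow_const (y := 1/p)).tendsto ((0:ℝ≥0∞))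
  have := h1.comp hA
  simpa [Function.comp_def, ENNReal.zero_rpow_of_pos (by positivity : (0:ℝ) < 1/p),
    ENNReal.zero_rpow_of_pos (by positivity : (0:ℝ) < p⁻¹)] using this


set_option maxHeartbeats 2000000 in
/-- If `b ∈ L^p(ℝ^d)` with `p ∈ [1,∞)` and probability measures `μ^n` converge weakly
to `μ`, then `b∗μ^n → b∗μ` in `L^p(ℝ^d)`. -/
theorem stmt_3 (d : ℕ) (p : ℝ) (hp1 : 1 ≤ p)
    (b : (Fin d → ℝ) → ℝ) (hb : MemLp b (ENNReal.ofReal p) volume)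
    (μ : ℕ → Measure (Fin d → ℝ)) (ν : Measure (Fin d → ℝ))
    (hμ : ∀ n, IsProbabilityMeasure (μ n)) (hν : IsProbabilityMeasure ν)
    (hweak : ∀ g : BoundedContinuousFunction (Fin d → ℝ) ℝ,
      Tendsto (fun n => ∫ x, g x ∂(μ n)) atTop (𝓝 (∫ x, g x ∂ν))) :
    Tendsto (fun n =>
        eLpNorm (fun x => (∫ y, b (x - y) ∂(μ n)) - ∫ y, b (x - y) ∂ν)
          (ENNReal.ofReal p) volume)
      atTop (𝓝 0) := by
  have hp0 : (0:ℝ) < p := lt_of_lt_of_le one_pos hp1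
  have hq0 : ENNReal.ofReal p ≠ 0 := by simpa [ENNReal.ofReal_eq_zero] using hp0
  have hqt : ENNReal.ofReal p ≠ ∞ := ENNReal.ofReal_ne_top
  have hq1 : 1 ≤ ENNReal.ofReal p := by
    simpa [ENNReal.ofReal_one] using ENNReal.ofReal_le_ofReal hp1
  -- replace b by a measurable representative
  set b' := hb.1.mk b with hb'def
  have hb'm : StronglyMeasurable b' := hb.1.stronglyMeasurable_mk
  have hbb' : b =ᵐ[volume] b' := hb.1.ae_eq_mk
  have hb'mem : MemLp b' (ENNReal.ofReal p) volume := hb.ae_eq hbb'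
  have hred : ∀ m : Measure (Fin d → ℝ), IsProbabilityMeasure m →
      ∀ᵐ x ∂(volume : Measure (Fin d → ℝ)),
        ∫ y, b (x - y) ∂m = ∫ y, b' (x - y) ∂m := by
    intro m hm
    filter_upwards [aux_ae_slice m hbb'] with x hx using integral_congr_ae hx
  have hgoal_eq : (fun n =>
      eLpNorm (fun x => (∫ y, b (x - y) ∂(μ n)) - ∫ y, b (x - y) ∂ν)
        (ENNReal.ofReal p) volume) = (fun n =>
      eLpNorm (fun x => (∫ y, b' (x - y) ∂(μ n)) - ∫ y, b' (x - y) ∂ν)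
        (ENNReal.ofReal p) volume) := by
    funext n
    apply eLpNorm_congr_ae
    filter_upwards [hred (μ n) (hμ n), hred ν hν] with x h1 h2
    rw [h1, h2]
  rw [hgoal_eq]
  rw [ENNReal.tendsto_nhds_zero]
  intro ε hε
  set η := min (ε / 5) 1 with hηdef
  have hη0 : η ≠ 0 := by
    refine ne_of_gt (lt_min ?_ zero_lt_one)
    exact ENNReal.div_pos hε.ne' (by norm_num)
  have hη1 : η ≤ 1 := min_le_right _ _
  have hη5 : 5 * η ≤ ε := by
    calc (5:ℝ≥0∞) * η ≤ 5 * (ε / 5) := by gcongr; exact min_le_left _ _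
      _ = ε := ENNReal.mul_div_cancel' (by norm_num) (by norm_num)
  -- continuous compactly supported approximation
  obtain ⟨c, hcs, hbc, hc, hcmem⟩ :=
    hb'mem.exists_hasCompactSupport_eLpNorm_sub_le hqt hη0
  set C := eLpNorm c (ENNReal.ofReal p) volume with hCdef
  have hCfin : C + 1 ≠ ∞ := by
    simp [hCdef, ENNReal.add_eq_top, hcmem.2.ne]
  -- the threshold θ
  set θ := min 1 (η / (C + 1)) with hθdef
  have hθ0 : θ ≠ 0 := by
    refine ne_of_gt (lt_min zero_lt_one ?_)
    exact ENNReal.div_pos hη0 hCfin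
  have hθ1 : θ ≤ 1 := min_le_left _ _
  have hθC : θ * C ≤ η := by
    calc θ * C ≤ η / (C + 1) * (C + 1) := by
          gcongr
          · exact min_le_right _ _
          · exact le_self_add
      _ = η := ENNReal.div_mul_cancel (by simp) hCfin
  -- a real threshold below θ
  obtain ⟨t, ht0, htθ⟩ : ∃ t : ℝ, 0 < t ∧ ENNReal.ofReal t ≤ θ := by
    refine ⟨(min θ 1).toReal / 2, ?_, ?_⟩
    · apply half_pos
      apply ENNReal.toReal_pos (ne_of_gt (lt_min (zero_lt_iff.mpr hθ0) zero_lt_one))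
      exact ne_top_of_le_ne_top (by norm_num) (min_le_right _ _)
    · calc ENNReal.ofReal ((min θ 1).toReal / 2) ≤ ENNReal.ofReal ((min θ 1).toReal) :=
            ENNReal.ofReal_le_ofReal (by linarith [ENNReal.toReal_nonneg (a := min θ 1)])
        _ = min θ 1 := ENNReal.ofReal_toReal (ne_top_of_le_ne_top (by norm_num) (min_le_right _ _))
        _ ≤ θ := min_le_left _ _
  -- choose a radius R with ν of the complement of the ball small
  obtain ⟨n₀, hn₀⟩ : ∃ n₀ : ℕ, ν ((closedBall (0 : Fin d → ℝ) (n₀:ℝ))ᶜ) < ENNReal.ofReal (t/2) := by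
    have htend : Tendsto (fun n : ℕ => ν ((closedBall (0 : Fin d → ℝ) (n:ℝ))ᶜ)) atTop
        (𝓝 (ν (⋂ n : ℕ, (closedBall (0 : Fin d → ℝ) (n:ℝ))ᶜ))) := by
      apply tendsto_measure_iInter_atTop
      · exact fun n => measurableSet_closedBall.compl.nullMeasurableSet
      · intro i j hij
        apply compl_subset_compl.2
        exact closedBall_subset_closedBall (by exact_mod_cast hij)
      · exact ⟨0, measure_ne_top ν _⟩
    have hempty : (⋂ n : ℕ, (closedBall (0 : Fin d → ℝ) (n:ℝ))ᶜ) = ∅ := by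
      ext y
      simp only [mem_iInter, mem_compl_iff, mem_closedBall, dist_zero_right, not_le, mem_empty_iff_false,
        iff_false, not_forall, not_lt]
      obtain ⟨n, hn⟩ := exists_nat_ge ‖y‖
      exact ⟨n, by simpa using hn⟩
    rw [hempty] at htend
    simp only [measure_empty] at htend
    exact (htend.eventually_lt_const (by positivity : (0:ℝ≥0∞) < ENNReal.ofReal (t/2))).exists
  set R := (n₀ : ℝ) with hRdef
  -- the cutoff function χ
  set χ : (Fin d → ℝ) → ℝ := fun y => max 0 (min 1 (R + 1 - ‖y‖)) with hχdef
  have hχcont : Continuous χ :=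
    continuous_const.max (continuous_const.min (continuous_const.sub continuous_norm))
  have hχ01 : ∀ y, χ y ∈ Icc (0:ℝ) 1 := fun y =>
    ⟨le_max_left _ _, max_le zero_le_one (min_le_left _ _)⟩
  have hχs : HasCompactSupport χ := by
    apply HasCompactSupport.intro (isCompact_closedBall (0 : Fin d → ℝ) (R + 1))
    intro y hy
    have : R + 1 < ‖y‖ := by
      simpa [dist_zero_right] using hy
    simp only [hχdef]
    rw [max_eq_left]
    exact min_le_of_right_le (by linarith)
  have hχ1 : ∀ y : Fin d → ℝ, ‖y‖ ≤ R → χ y = 1 := by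
    intro y hy
    simp only [hχdef]
    rw [min_eq_left (by linarith), max_eq_right zero_le_one]
  -- the (1 - χ) as a bounded continuous function
  set g1 : BoundedContinuousFunction (Fin d → ℝ) ℝ :=
    BoundedContinuousFunction.ofNormedAddCommGroup (fun y => 1 - χ y)
      (continuous_const.sub hχcont) 1 (fun y => by
        show ‖1 - χ y‖ ≤ 1
        rw [Real.norm_eq_abs, abs_le]
        constructor <;> [linarith [(hχ01 y).2]; linarith [(hχ01 y).1]]) with hg1def
  have hg1coe : ∀ y, g1 y = 1 - χ y := fun y => rfl
  -- tail integrals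
  have hg1int : ∀ (m : Measure (Fin d → ℝ)), IsFiniteMeasure m →
      Integrable (fun y => 1 - χ y) m := by
    intro m hm
    exact g1.integrable m
  have hIν : ∫ y, (1 - χ y) ∂ν ≤ t / 2 := by
    have hle : ∀ y, 1 - χ y ≤ ((closedBall (0 : Fin d → ℝ) R)ᶜ).indicator (fun _ => (1:ℝ)) y := by
      intro y
      by_cases hy : y ∈ closedBall (0 : Fin d → ℝ) R
      · have : χ y = 1 := hχ1 y (by simpa [dist_zero_right] using hy)
        rw [this]
        simp only [sub_self]
        exact indicator_nonneg (by intros; norm_num) y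
      · rw [indicator_of_mem (by simpa using hy)]
        linarith [(hχ01 y).1]
    calc ∫ y, (1 - χ y) ∂ν
        ≤ ∫ y, ((closedBall (0 : Fin d → ℝ) R)ᶜ).indicator (fun _ => (1:ℝ)) y ∂ν := by
          apply integral_mono (hg1int ν inferInstance) _ hle
          exact (integrable_const (1:ℝ)).indicator measurableSet_closedBall.compl
      _ = (ν ((closedBall (0 : Fin d → ℝ) R)ᶜ)).toReal • (1:ℝ) :=
          integral_indicator_const (1:ℝ) measurableSet_closedBall.compl
      _ ≤ t / 2 := by
          rw [smul_eq_mul, mul_one]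
          exact ENNReal.toReal_le_of_le_ofReal (by positivity) hn₀.le
  -- lintegral of the weight
  have hweight : ∀ (m : Measure (Fin d → ℝ)), IsFiniteMeasure m →
      ∫⁻ y, ENNReal.ofReal (1 - χ y) ∂m = ENNReal.ofReal (∫ y, (1 - χ y) ∂m) := by
    intro m hm
    rw [ofReal_integral_eq_lintegral_ofReal (hg1int m hm)
      (Eventually.of_forall fun y => by show (0:ℝ) ≤ 1 - χ y; linarith [(hχ01 y).2])]
  -- eventually the μ n tail is small
  have hev_tail : ∀ᶠ n in atTop, ∫ y, (1 - χ y) ∂(μ n) < t := by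
    have := hweak g1
    apply this.eventually_lt_const
    calc ∫ y, g1 y ∂ν = ∫ y, (1 - χ y) ∂ν := by rfl
      _ ≤ t / 2 := hIν
      _ < t := by linarith
  -- eventually the main term is small
  have hev_main := ENNReal.tendsto_nhds_zero.mp
    (aux_main_term hp1 hc hcs hχcont hχs hχ01 μ ν hμ hν hweak) η (zero_lt_iff.mpr hη0)
  -- bound Cc for c
  obtain ⟨Cc, hCc⟩ := hcs.exists_bound_of_continuous hc
  -- integrability of the c-pieces
  have hcint : ∀ (m : Measure (Fin d → ℝ)), IsFiniteMeasure m → ∀ x : Fin d → ℝ,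
      Integrable (fun y => c (x - y)) m := by
    intro m hm x
    exact (BoundedContinuousFunction.ofNormedAddCommGroup (fun y => c (x - y))
      (hc.comp (continuous_const.sub continuous_id)) Cc (fun y => hCc _)).integrable m
  have hc2int : ∀ (m : Measure (Fin d → ℝ)), IsFiniteMeasure m → ∀ x : Fin d → ℝ,
      Integrable (fun y => c (x - y) * χ y) m := by
    intro m hm x
    refine ((hcint m hm x).bdd_mul hχcont.aestronglyMeasurable (c := 1) (Eventually.of_forall fun y => by
        show ‖χ y‖ ≤ 1
        rw [Real.norm_eq_abs, abs_le]
        exact ⟨by linarith [(hχ01 y).1], (hχ01 y).2⟩)).congr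
      (Eventually.of_forall fun y => by ring)
  have hc3int : ∀ (m : Measure (Fin d → ℝ)), IsFiniteMeasure m → ∀ x : Fin d → ℝ,
      Integrable (fun y => c (x - y) * (1 - χ y)) m := by
    intro m hm x
    refine ((hcint m hm x).bdd_mul (continuous_const.sub hχcont).aestronglyMeasurable
      (c := 1) (Eventually.of_forall fun y => by
        show ‖1 - χ y‖ ≤ 1
        rw [Real.norm_eq_abs, abs_le]
        exact ⟨by linarith [(hχ01 y).2], by linarith [(hχ01 y).1]⟩)).congr
      (Eventually.of_forall fun y => by simp only [Pi.sub_apply]; ring)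
  -- decomposition of the convolution
  have hdecomp : ∀ (m : Measure (Fin d → ℝ)), IsProbabilityMeasure m →
      ∀ᵐ x ∂(volume : Measure (Fin d → ℝ)),
        ∫ y, b' (x - y) ∂m = (∫ y, (b' - c) (x - y) ∂m) + (∫ y, c (x - y) * χ y ∂m)
          + ∫ y, c (x - y) * (1 - χ y) ∂m := by
    intro m hm
    filter_upwards [aux_ae_integrable hp1 hb'm.measurable hb'mem.2.ne m] with x hx
    have e1 : ∫ y, (b' - c) (x - y) ∂m = (∫ y, b' (x - y) ∂m) - ∫ y, c (x - y) ∂m := by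
      have := integral_sub hx (hcint m inferInstance x)
      simpa [Pi.sub_apply] using this
    have e2 : ∫ y, c (x - y) ∂m =
        (∫ y, c (x - y) * χ y ∂m) + ∫ y, c (x - y) * (1 - χ y) ∂m := by
      rw [← integral_add (hc2int m inferInstance x) (hc3int m inferInstance x)]
      apply integral_congr_ae
      apply Eventually.of_forall
      intro y
      ring
    linarith [e1, e2]
  -- measurability of the pieces
  have hsm1 : ∀ (m : Measure (Fin d → ℝ)), SFinite m →
      AEStronglyMeasurable (fun x => ∫ y, (b' - c) (x - y) ∂m) volume := by
    intro m hm
    exact (StronglyMeasurable.integral_prod_right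
      (f := fun (x y : Fin d → ℝ) => (b' - c) (x - y))
      ((hb'm.sub hc.stronglyMeasurable).comp_measurable
        (measurable_fst.sub measurable_snd))).aestronglyMeasurable
  have hsm2 : ∀ (m : Measure (Fin d → ℝ)), SFinite m →
      AEStronglyMeasurable (fun x => ∫ y, c (x - y) * χ y ∂m) volume := by
    intro m hm
    exact (StronglyMeasurable.integral_prod_right
      (f := fun (x y : Fin d → ℝ) => c (x - y) * χ y)
      ((hc.stronglyMeasurable.comp_measurable (measurable_fst.sub measurable_snd)).mul
        (hχcont.stronglyMeasurable.comp_measurable measurable_snd))).aestronglyMeasurable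
  have hsm3 : ∀ (m : Measure (Fin d → ℝ)), SFinite m →
      AEStronglyMeasurable (fun x => ∫ y, c (x - y) * (1 - χ y) ∂m) volume := by
    intro m hm
    exact (StronglyMeasurable.integral_prod_right
      (f := fun (x y : Fin d → ℝ) => c (x - y) * (1 - χ y))
      ((hc.stronglyMeasurable.comp_measurable (measurable_fst.sub measurable_snd)).mul
        (((continuous_const (y := (1:ℝ))).sub hχcont).stronglyMeasurable.comp_measurable
          measurable_snd))).aestronglyMeasurable
  -- bounds on the pieces
  have hwmeas : Measurable fun y => ENNReal.ofReal (1 - χ y) :=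
    (measurable_const.sub hχcont.measurable).ennreal_ofReal
  have hbF1 : ∀ (m : Measure (Fin d → ℝ)), IsProbabilityMeasure m →
      eLpNorm (fun x => ∫ y, (b' - c) (x - y) ∂m) (ENNReal.ofReal p) volume ≤ η := by
    intro m hm
    have h := aux_conv_bound hp1 (f := b' - c) (hb'm.measurable.sub hc.measurable)
      (w := fun _ => (1:ℝ≥0∞)) measurable_const m (δ := 1)
      (by simp [measure_univ]) le_rfl
      (F := fun x => ∫ y, (b' - c) (x - y) ∂m) (fun x => by
        calc (‖∫ y, (b' - c) (x - y) ∂m‖₊ : ℝ≥0∞)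
            ≤ ∫⁻ y, (‖(b' - c) (x - y)‖₊ : ℝ≥0∞) ∂m := enorm_integral_le_lintegral_enorm _
          _ = ∫⁻ y, (‖(b' - c) (x - y)‖₊ : ℝ≥0∞) * (fun _ => (1:ℝ≥0∞)) y ∂m := by simp)
    rw [one_mul] at h
    exact le_trans h hbc
  have hbF3 : ∀ (m : Measure (Fin d → ℝ)), IsProbabilityMeasure m →
      (∫⁻ y, ENNReal.ofReal (1 - χ y) ∂m) ≤ θ →
      eLpNorm (fun x => ∫ y, c (x - y) * (1 - χ y) ∂m) (ENNReal.ofReal p) volume ≤ η := by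
    intro m hm hδ
    have h := aux_conv_bound hp1 (f := c) hc.measurable hwmeas m hδ hθ1
      (F := fun x => ∫ y, c (x - y) * (1 - χ y) ∂m) (fun x => by
        calc (‖∫ y, c (x - y) * (1 - χ y) ∂m‖₊ : ℝ≥0∞)
            ≤ ∫⁻ y, (‖c (x - y) * (1 - χ y)‖₊ : ℝ≥0∞) ∂m :=
              enorm_integral_le_lintegral_enorm _
          _ = ∫⁻ y, (‖c (x - y)‖₊ : ℝ≥0∞) * ENNReal.ofReal (1 - χ y) ∂m := by
              apply lintegral_congr fun y => ?_
              rw [nnnorm_mul, ENNReal.coe_mul, ← enorm_eq_nnnorm (1 - χ y),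
                Real.enorm_eq_ofReal (by linarith [(hχ01 y).2] : (0:ℝ) ≤ 1 - χ y)])
    exact le_trans h hθC
  -- conclusion
  filter_upwards [hev_tail, hev_main] with n htail hmain
  have hδμ : ∫⁻ y, ENNReal.ofReal (1 - χ y) ∂(μ n) ≤ θ := by
    rw [hweight (μ n) inferInstance]
    exact le_trans (ENNReal.ofReal_le_ofReal htail.le) htθ
  have hδν : ∫⁻ y, ENNReal.ofReal (1 - χ y) ∂ν ≤ θ := by
    rw [hweight ν inferInstance]
    exact le_trans (ENNReal.ofReal_le_ofReal (by linarith : ∫ y, (1 - χ y) ∂ν ≤ t)) htθ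
  have hdec_ae : (fun x => (∫ y, b' (x - y) ∂(μ n)) - ∫ y, b' (x - y) ∂ν) =ᵐ[volume]
      (fun x => ∫ y, (b' - c) (x - y) ∂(μ n))
      + ((fun x => ∫ y, c (x - y) * χ y ∂(μ n)) - fun x => ∫ y, c (x - y) * χ y ∂ν)
      + (fun x => ∫ y, c (x - y) * (1 - χ y) ∂(μ n))
      - (fun x => ∫ y, (b' - c) (x - y) ∂ν)
      - (fun x => ∫ y, c (x - y) * (1 - χ y) ∂ν) := by
    filter_upwards [hdecomp (μ n) (hμ n), hdecomp ν hν] with x h1 h2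
    show _ = ((_ + _ + _ - _ - _ : (Fin d → ℝ) → ℝ)) x
    simp only [Pi.add_apply, Pi.sub_apply]
    rw [h1, h2]
    simp only [Pi.sub_apply]
    ring
  rw [eLpNorm_congr_ae hdec_ae]
  have a1 := hsm1 (μ n) inferInstance
  have a2 := (hsm2 (μ n) inferInstance).sub (hsm2 ν inferInstance)
  have a3 := hsm3 (μ n) inferInstance
  have a4 := hsm1 ν inferInstance
  have a5 := hsm3 ν inferInstance
  calc eLpNorm ((fun x => ∫ y, (b' - c) (x - y) ∂(μ n))
      + ((fun x => ∫ y, c (x - y) * χ y ∂(μ n)) - fun x => ∫ y, c (x - y) * χ y ∂ν)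
      + (fun x => ∫ y, c (x - y) * (1 - χ y) ∂(μ n))
      - (fun x => ∫ y, (b' - c) (x - y) ∂ν)
      - (fun x => ∫ y, c (x - y) * (1 - χ y) ∂ν)) (ENNReal.ofReal p) volume
      ≤ eLpNorm ((fun x => ∫ y, (b' - c) (x - y) ∂(μ n))
        + ((fun x => ∫ y, c (x - y) * χ y ∂(μ n)) - fun x => ∫ y, c (x - y) * χ y ∂ν)
        + (fun x => ∫ y, c (x - y) * (1 - χ y) ∂(μ n))
        - (fun x => ∫ y, (b' - c) (x - y) ∂ν)) (ENNReal.ofReal p) volume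
        + eLpNorm (fun x => ∫ y, c (x - y) * (1 - χ y) ∂ν) (ENNReal.ofReal p) volume :=
      eLpNorm_sub_le (((a1.add a2).add a3).sub a4) a5 hq1
    _ ≤ (eLpNorm ((fun x => ∫ y, (b' - c) (x - y) ∂(μ n))
        + ((fun x => ∫ y, c (x - y) * χ y ∂(μ n)) - fun x => ∫ y, c (x - y) * χ y ∂ν)
        + (fun x => ∫ y, c (x - y) * (1 - χ y) ∂(μ n))) (ENNReal.ofReal p) volume
        + eLpNorm (fun x => ∫ y, (b' - c) (x - y) ∂ν) (ENNReal.ofReal p) volume)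
        + eLpNorm (fun x => ∫ y, c (x - y) * (1 - χ y) ∂ν) (ENNReal.ofReal p) volume := by
      gcongr
      exact eLpNorm_sub_le ((a1.add a2).add a3) a4 hq1
    _ ≤ ((eLpNorm ((fun x => ∫ y, (b' - c) (x - y) ∂(μ n))
        + ((fun x => ∫ y, c (x - y) * χ y ∂(μ n)) - fun x => ∫ y, c (x - y) * χ y ∂ν))
          (ENNReal.ofReal p) volume
        + eLpNorm (fun x => ∫ y, c (x - y) * (1 - χ y) ∂(μ n)) (ENNReal.ofReal p) volume)
        + eLpNorm (fun x => ∫ y, (b' - c) (x - y) ∂ν) (ENNReal.ofReal p) volume)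
        + eLpNorm (fun x => ∫ y, c (x - y) * (1 - χ y) ∂ν) (ENNReal.ofReal p) volume := by
      gcongr
      exact eLpNorm_add_le (a1.add a2) a3 hq1
    _ ≤ (((eLpNorm (fun x => ∫ y, (b' - c) (x - y) ∂(μ n)) (ENNReal.ofReal p) volume
        + eLpNorm ((fun x => ∫ y, c (x - y) * χ y ∂(μ n)) - fun x => ∫ y, c (x - y) * χ y ∂ν)
          (ENNReal.ofReal p) volume)
        + eLpNorm (fun x => ∫ y, c (x - y) * (1 - χ y) ∂(μ n)) (ENNReal.ofReal p) volume)
        + eLpNorm (fun x => ∫ y, (b' - c) (x - y) ∂ν) (ENNReal.ofReal p) volume)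
        + eLpNorm (fun x => ∫ y, c (x - y) * (1 - χ y) ∂ν) (ENNReal.ofReal p) volume := by
      gcongr
      exact eLpNorm_add_le a1 a2 hq1
    _ ≤ (((η + η) + η) + η) + η := by
      gcongr
      · exact hbF1 (μ n) (hμ n)
      · exact hmain
      · exact hbF3 (μ n) (hμ n) hδμ
      · exact hbF1 ν hν
      · exact hbF3 ν hν hδν
    _ = 5 * η := by ring
    _ ≤ ε := hη5
end

section
/- Let p, q ∈ [1,∞), let (b^n) ⊂ L^q([0,T]; L^p(ℝ^d)) converge to b in L^q([0,T]; L^p(ℝ^d)), and let μ^n, μ : [0,T] → P(ℝ^d) be (measurable) flows of probability measures such that μ^n_t converges weakly to μ_t for every t ∈ [0,T]. Then b^n_t ∗ μ^n_t → b_t ∗ μ_t in L^q([0,T]; L^p(ℝ^d)). -/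
open MeasureTheory Filter Set
open scoped ENNReal NNReal Topology


namespace Stmt15

lemma pow_lintegral_le {α : Type*} [MeasurableSpace α] (ν : Measure α) [IsFiniteMeasure ν]
    {h : α → ℝ≥0∞} (hh : AEMeasurable h ν) {p : ℝ} (hp : 1 ≤ p) :
    (∫⁻ y, h y ∂ν) ^ p ≤ (ν Set.univ) ^ (p - 1) * ∫⁻ y, h y ^ p ∂ν := by
  rcases eq_or_lt_of_le hp with hp1 | hp1
  · simp [← hp1]
  · have hpq : p.HolderConjugate (Real.conjExponent p) := Real.HolderConjugate.conjExponent hp1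
    have h2 := ENNReal.lintegral_mul_le_Lp_mul_Lq ν hpq (g := fun _ => (1:ℝ≥0∞)) hh aemeasurable_const
    simp only [Pi.mul_apply, mul_one, ENNReal.one_rpow, lintegral_one] at h2
    have hp0 : (0:ℝ) ≤ p := le_trans zero_le_one hp
    have h4 := ENNReal.rpow_le_rpow h2 hp0
    refine h4.trans_eq ?_
    rw [ENNReal.mul_rpow_of_nonneg _ _ hp0, ← ENNReal.rpow_mul, ← ENNReal.rpow_mul]
    have hpne : p ≠ 0 := by positivity
    rw [one_div, inv_mul_cancel₀ hpne, ENNReal.rpow_one]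
    have : 1 / Real.conjExponent p * p = p - 1 := by
      rw [one_div, hpq.conjugate_eq]
      field_simp
    rw [this, mul_comm]

lemma conv_lintegral_le {d : ℕ} {H : (Fin d → ℝ) → ℝ≥0∞} (hH : Measurable H)
    (ν : Measure (Fin d → ℝ)) [IsFiniteMeasure ν] {p : ℝ} (hp : 1 ≤ p) :
    ∫⁻ x, (∫⁻ y, H (x - y) ∂ν) ^ p ≤ (ν Set.univ) ^ p * ∫⁻ x, H x ^ p := by
  have hp0 : (0:ℝ) ≤ p := le_trans zero_le_one hp
  have hmeas : Measurable fun z : (Fin d → ℝ) × (Fin d → ℝ) => H (z.1 - z.2) ^ p :=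
    (hH.comp (measurable_fst.sub measurable_snd)).pow_const _
  calc ∫⁻ x, (∫⁻ y, H (x - y) ∂ν) ^ p
      ≤ ∫⁻ x, (ν Set.univ) ^ (p - 1) * ∫⁻ y, H (x - y) ^ p ∂ν := by
        refine lintegral_mono fun x => ?_
        exact pow_lintegral_le ν ((hH.comp (measurable_const.sub measurable_id)).aemeasurable) hp
    _ = (ν Set.univ) ^ (p - 1) * ∫⁻ x, ∫⁻ y, H (x - y) ^ p ∂ν := by
        rw [lintegral_const_mul _ ?_]
        exact hmeas.lintegral_prod_right'
    _ = (ν Set.univ) ^ (p - 1) * ∫⁻ y, ∫⁻ x, H (x - y) ^ p ∂volume ∂ν := by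
        rw [lintegral_lintegral_swap hmeas.aemeasurable]
    _ = (ν Set.univ) ^ (p - 1) * ∫⁻ y, ∫⁻ x, H x ^ p ∂volume ∂ν := by
        congr 1
        refine lintegral_congr fun y => ?_
        exact lintegral_sub_right_eq_self (fun x => H x ^ p) y
    _ = (ν Set.univ) ^ p * ∫⁻ x, H x ^ p := by
        have hsplit : (ν Set.univ) ^ p = (ν Set.univ) ^ (p-1) * (ν Set.univ) ^ (1:ℝ) := by
          rw [← ENNReal.rpow_add_of_nonneg (p-1) 1 (by linarith) zero_le_one, sub_add_cancel]
        rw [lintegral_const, hsplit, ENNReal.rpow_one]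
        ring

variable {d : ℕ}

lemma eLpNorm_conv_le {f : (Fin d → ℝ) → ℝ} (hf : Measurable f)
    (ν : Measure (Fin d → ℝ)) [IsFiniteMeasure ν] {p : ℝ} (hp : 1 ≤ p) :
    eLpNorm (fun x => ∫ y, f (x - y) ∂ν) (ENNReal.ofReal p) volume
      ≤ ν Set.univ * eLpNorm f (ENNReal.ofReal p) volume := by
  have hp0 : (0:ℝ) < p := lt_of_lt_of_le zero_lt_one hp
  have hP0 : ENNReal.ofReal p ≠ 0 := by
    simp only [ne_eq, ENNReal.ofReal_eq_zero, not_le]; linarith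
  have hPt : ENNReal.ofReal p ≠ ∞ := ENNReal.ofReal_ne_top
  rw [eLpNorm_eq_lintegral_rpow_enorm_toReal hP0 hPt, eLpNorm_eq_lintegral_rpow_enorm_toReal hP0 hPt,
    ENNReal.toReal_ofReal hp0.le]
  have key := conv_lintegral_le (H := fun x => (‖f x‖₊ : ℝ≥0∞)) hf.nnnorm.coe_nnreal_ennreal ν hp
  have step1 : ∫⁻ x, (‖∫ y, f (x - y) ∂ν‖₊ : ℝ≥0∞) ^ p
      ≤ ∫⁻ x, (∫⁻ y, (‖f (x-y)‖₊:ℝ≥0∞) ∂ν) ^ p := by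
    refine lintegral_mono fun x => ENNReal.rpow_le_rpow ?_ hp0.le
    exact enorm_integral_le_lintegral_enorm _
  have h2 := ENNReal.rpow_le_rpow (step1.trans key) (by positivity : (0:ℝ) ≤ 1/p)
  refine h2.trans_eq ?_
  rw [ENNReal.mul_rpow_of_nonneg _ _ (by positivity), ← ENNReal.rpow_mul,
    mul_one_div_cancel (ne_of_gt hp0), ENNReal.rpow_one]
  rfl

lemma ae_integrable_conv {f : (Fin d → ℝ) → ℝ} (hf : Measurable f) {p : ℝ} (hp : 1 ≤ p)
    (hfp : eLpNorm f (ENNReal.ofReal p) volume < ∞)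
    (ν : Measure (Fin d → ℝ)) [IsFiniteMeasure ν] :
    ∀ᵐ x : Fin d → ℝ, Integrable (fun y => f (x - y)) ν := by
  have hp0 : (0:ℝ) < p := lt_of_lt_of_le zero_lt_one hp
  have hP0 : ENNReal.ofReal p ≠ 0 := by
    simp only [ne_eq, ENNReal.ofReal_eq_zero, not_le]; linarith
  have hPt : ENNReal.ofReal p ≠ ∞ := ENNReal.ofReal_ne_top
  have hfin : ∫⁻ x, ((‖f x‖₊:ℝ≥0∞)) ^ p < ∞ := by
    rw [eLpNorm_eq_lintegral_rpow_enorm_toReal hP0 hPt, ENNReal.toReal_ofReal hp0.le] at hfp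
    simp only [enorm_eq_nnnorm] at hfp
    by_contra h
    rw [not_lt, top_le_iff] at h
    rw [h, ENNReal.top_rpow_of_pos (by positivity : (0:ℝ) < 1/p)] at hfp
    exact absurd hfp (lt_irrefl _)
  have key := conv_lintegral_le (H := fun x => (‖f x‖₊ : ℝ≥0∞)) hf.nnnorm.coe_nnreal_ennreal ν hp
  have hlt : ∫⁻ x, (∫⁻ y, (‖f (x - y)‖₊:ℝ≥0∞) ∂ν) ^ p < ∞ :=
    lt_of_le_of_lt key (ENNReal.mul_lt_top
      (ENNReal.rpow_lt_top_of_nonneg hp0.le (measure_ne_top ν _)) hfin)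
  have hmeasx : Measurable fun x : Fin d → ℝ => (∫⁻ y, (‖f (x - y)‖₊:ℝ≥0∞) ∂ν) ^ p :=
    ((hf.nnnorm.coe_nnreal_ennreal.comp (measurable_fst.sub measurable_snd)).lintegral_prod_right').pow_const _
  filter_upwards [ae_lt_top hmeasx hlt.ne] with x hx
  have hlty : (∫⁻ y, (‖f (x - y)‖₊:ℝ≥0∞) ∂ν) < ∞ := by
    by_contra hcon
    rw [not_lt, top_le_iff] at hcon
    rw [hcon, ENNReal.top_rpow_of_pos hp0] at hx
    exact absurd hx (lt_irrefl _)
  exact ⟨(hf.comp (measurable_const.sub measurable_id)).aestronglyMeasurable, hlty⟩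

lemma measurable_conv {g : (Fin d → ℝ) → ℝ} (hg : Measurable g)
    (ρ : Measure (Fin d → ℝ)) [SFinite ρ] :
    Measurable fun x => ∫ y, g (x - y) ∂ρ := by
  have h1 : StronglyMeasurable fun z : (Fin d → ℝ) × (Fin d → ℝ) => g (z.1 - z.2) :=
    (hg.comp (measurable_fst.sub measurable_snd)).stronglyMeasurable
  have h2 := h1.integral_kernel_prod_right' (κ := ProbabilityTheory.Kernel.const _ ρ)
  simpa only [ProbabilityTheory.Kernel.const_apply] using h2.measurable

lemma measurable_conv2 {b : ℝ → (Fin d → ℝ) → ℝ}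
    (hb : Measurable fun z : ℝ × (Fin d → ℝ) => b z.1 z.2)
    {μ : ℝ → Measure (Fin d → ℝ)} (hμ : Measurable μ) (hμf : ∀ t, IsProbabilityMeasure (μ t)) :
    Measurable fun z : ℝ × (Fin d → ℝ) => ∫ y, b z.1 (z.2 - y) ∂(μ z.1) := by
  let κ : ProbabilityTheory.Kernel (ℝ × (Fin d → ℝ)) (Fin d → ℝ) :=
    ⟨fun z => μ z.1, hμ.comp measurable_fst⟩
  haveI : ProbabilityTheory.IsMarkovKernel κ := ⟨fun z => hμf z.1⟩
  have h1 : StronglyMeasurable fun w : (ℝ × (Fin d → ℝ)) × (Fin d → ℝ) => b w.1.1 (w.1.2 - w.2) :=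
    (hb.comp ((measurable_fst.fst).prodMk ((measurable_fst.snd).sub measurable_snd))).stronglyMeasurable
  have h2 := h1.integral_kernel_prod_right' (κ := κ)
  exact h2.measurable

lemma eLpNorm_indicator_conv_le {g : (Fin d → ℝ) → ℝ} (hg : Measurable g)
    (ρ : Measure (Fin d → ℝ)) [IsFiniteMeasure ρ]
    {S F : Set (Fin d → ℝ)} (hF : MeasurableSet F)
    (hzero : ∀ x ∈ S, ∀ y ∉ F, g (x - y) = 0) {p : ℝ} (hp : 1 ≤ p) :
    eLpNorm (S.indicator fun x => ∫ y, g (x - y) ∂ρ) (ENNReal.ofReal p) volume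
      ≤ ρ F * eLpNorm g (ENNReal.ofReal p) volume := by
  have hp0 : (0:ℝ) < p := lt_of_lt_of_le zero_lt_one hp
  have hP0 : ENNReal.ofReal p ≠ 0 := by
    simp only [ne_eq, ENNReal.ofReal_eq_zero, not_le]; linarith
  have hPt : ENNReal.ofReal p ≠ ∞ := ENNReal.ofReal_ne_top
  have hptw : ∀ x, (‖S.indicator (fun x => ∫ y, g (x - y) ∂ρ) x‖₊ : ℝ≥0∞)
      ≤ ∫⁻ y, (‖g (x - y)‖₊ : ℝ≥0∞) ∂(ρ.restrict F) := by
    intro x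
    by_cases hx : x ∈ S
    · rw [Set.indicator_of_mem hx]
      refine (show _ ≤ ∫⁻ y, (‖g (x - y)‖₊ : ℝ≥0∞) ∂ρ from enorm_integral_le_lintegral_enorm _).trans_eq ?_
      have hsplit : ∫⁻ y, (‖g (x - y)‖₊ : ℝ≥0∞) ∂ρ
          = (∫⁻ y, (‖g (x - y)‖₊ : ℝ≥0∞) ∂(ρ.restrict F))
            + ∫⁻ y, (‖g (x - y)‖₊ : ℝ≥0∞) ∂(ρ.restrict Fᶜ) := by
        rw [← lintegral_add_measure, Measure.restrict_add_restrict_compl hF]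
      have hzero' : ∫⁻ y, (‖g (x - y)‖₊ : ℝ≥0∞) ∂(ρ.restrict Fᶜ) = 0 := by
        have hm : AEMeasurable (fun y => (‖g (x - y)‖₊ : ℝ≥0∞)) (ρ.restrict Fᶜ) :=
          ((hg.comp (measurable_const.sub measurable_id)).nnnorm.coe_nnreal_ennreal).aemeasurable
        rw [lintegral_eq_zero_iff' hm]
        refine (ae_restrict_iff' hF.compl).mpr (Filter.Eventually.of_forall fun y hy => ?_)
        simp [hzero x hx y hy]
      rw [hsplit, hzero', add_zero]
    · rw [Set.indicator_of_notMem hx]; simp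
  rw [eLpNorm_eq_lintegral_rpow_enorm_toReal hP0 hPt, eLpNorm_eq_lintegral_rpow_enorm_toReal hP0 hPt,
    ENNReal.toReal_ofReal hp0.le]
  calc (∫⁻ x, (‖S.indicator (fun x => ∫ y, g (x - y) ∂ρ) x‖₊ : ℝ≥0∞) ^ p) ^ (1/p)
      ≤ (∫⁻ x, (∫⁻ y, (‖g (x - y)‖₊ : ℝ≥0∞) ∂(ρ.restrict F)) ^ p) ^ (1/p) := by
        exact ENNReal.rpow_le_rpow
          (lintegral_mono fun x => ENNReal.rpow_le_rpow (hptw x) hp0.le) (by positivity)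
    _ ≤ ((ρ.restrict F Set.univ) ^ p * ∫⁻ x, (‖g x‖₊ : ℝ≥0∞) ^ p) ^ (1/p) :=
        ENNReal.rpow_le_rpow (conv_lintegral_le hg.nnnorm.coe_nnreal_ennreal (ρ.restrict F) hp) (by positivity)
    _ = ρ F * (∫⁻ x, (‖g x‖₊ : ℝ≥0∞) ^ p) ^ (1/p) := by
        rw [ENNReal.mul_rpow_of_nonneg _ _ (by positivity), ← ENNReal.rpow_mul,
          mul_one_div_cancel (ne_of_gt hp0), ENNReal.rpow_one, Measure.restrict_apply_univ]

set_option maxHeartbeats 1000000 in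
lemma tendsto_eLpNorm_conv_compact
    {g : (Fin d → ℝ) → ℝ} (hgc : Continuous g) (hgs : HasCompactSupport g)
    {p : ℝ} (hp : 1 ≤ p)
    (μ : Measure (Fin d → ℝ)) (ν : ℕ → Measure (Fin d → ℝ))
    [IsProbabilityMeasure μ] [∀ n, IsProbabilityMeasure (ν n)]
    (hweak : ∀ φ : BoundedContinuousFunction (Fin d → ℝ) ℝ,
      Tendsto (fun n => ∫ x, φ x ∂(ν n)) atTop (𝓝 (∫ x, φ x ∂μ))) :
    Tendsto (fun n => eLpNorm (fun x => (∫ y, g (x - y) ∂(ν n)) - ∫ y, g (x - y) ∂μ)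
      (ENNReal.ofReal p) volume) atTop (𝓝 0) := by
  have hp0 : (0:ℝ) < p := lt_of_lt_of_le zero_lt_one hp
  have hP1 : (1:ℝ≥0∞) ≤ ENNReal.ofReal p := ENNReal.one_le_ofReal.mpr hp
  have hP0 : ENNReal.ofReal p ≠ 0 := by
    simp only [ne_eq, ENNReal.ofReal_eq_zero, not_le]; linarith
  have hPt : ENNReal.ofReal p ≠ ∞ := ENNReal.ofReal_ne_top
  have hgm : Measurable g := hgc.measurable
  obtain ⟨C, hC⟩ := hgs.exists_bound_of_continuous hgc
  have hC0 : 0 ≤ C := le_trans (norm_nonneg _) (hC 0)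
  obtain ⟨R, hR0, hR⟩ := hgs.isBounded.subset_closedBall_lt 0 0
  -- uniform bound on convolutions
  have hconvbd : ∀ (ρ : Measure (Fin d → ℝ)) [IsProbabilityMeasure ρ],
      ∀ x, ‖∫ y, g (x - y) ∂ρ‖ ≤ C := by
    intro ρ hρ x
    have := norm_integral_le_of_norm_le_const (μ := ρ) (f := fun y => g (x - y)) (C := C)
      (Filter.Eventually.of_forall fun y => hC _)
    simpa using this
  -- pointwise convergence
  have hpt : ∀ x, Tendsto (fun n => ∫ y, g (x - y) ∂(ν n)) atTop
      (𝓝 (∫ y, g (x - y) ∂μ)) := by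
    intro x
    let gB : BoundedContinuousFunction (Fin d → ℝ) ℝ :=
      BoundedContinuousFunction.ofNormedAddCommGroup g hgc C hC
    let φ : BoundedContinuousFunction (Fin d → ℝ) ℝ :=
      gB.compContinuous ⟨fun y => x - y, by continuity⟩
    have := hweak φ
    simpa [φ, gB] using this
  -- weak convergence of bundled probability measures
  let Pμ : ProbabilityMeasure (Fin d → ℝ) := ⟨μ, inferInstance⟩
  let Pν : ℕ → ProbabilityMeasure (Fin d → ℝ) := fun n => ⟨ν n, inferInstance⟩
  have htend : Tendsto Pν atTop (𝓝 Pμ) := by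
    rw [ProbabilityMeasure.tendsto_iff_forall_integral_tendsto]
    intro f
    exact hweak f
  -- Lp norm of g is finite
  set Npg := eLpNorm g (ENNReal.ofReal p) volume with hNpg
  have hNfin : Npg ≠ ∞ := (hgc.memLp_of_hasCompactSupport (p := ENNReal.ofReal p) hgs).2.ne
  refine ENNReal.tendsto_nhds_zero.mpr fun ε hε => ?_
  by_cases hεtop : ε = ∞
  · exact Filter.Eventually.of_forall fun n => hεtop ▸ le_top
  -- the quantity δ
  set δ : ℝ≥0∞ := ε / 4 / (Npg + 1) with hδdef
  have hδ0 : δ ≠ 0 := by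
    apply ENNReal.div_ne_zero.mpr
    constructor
    · apply ENNReal.div_ne_zero.mpr
      exact ⟨hε.ne', by norm_num⟩
    · exact ENNReal.add_ne_top.mpr ⟨hNfin, by norm_num⟩
  have hεqt : ε/4 ≠ ∞ := (ENNReal.div_lt_top hεtop (by norm_num)).ne
  have hδt : δ ≠ ∞ := (ENNReal.div_lt_top hεqt (by simp)).ne
  have hδmul : δ * (Npg + 1) = ε / 4 :=
    ENNReal.div_mul_cancel (by simp) (ENNReal.add_ne_top.mpr ⟨hNfin, by norm_num⟩)
  have hδNpg : δ * Npg ≤ ε / 4 := by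
    refine le_trans (mul_le_mul_right ?_ δ) hδmul.le
    exact le_self_add
  -- choose M₀ with small tails
  have hiInter : Tendsto (fun M : ℕ => μ ((Metric.ball (0 : Fin d → ℝ) M)ᶜ)) atTop (𝓝 0) := by
    have h1 := tendsto_measure_iInter_atTop (μ := μ)
      (s := fun M : ℕ => (Metric.ball (0 : Fin d → ℝ) (M:ℝ))ᶜ)
      (fun i => Metric.isOpen_ball.measurableSet.compl.nullMeasurableSet)
      (fun i j hij => compl_subset_compl.mpr (Metric.ball_subset_ball (by exact_mod_cast hij)))
      ⟨0, measure_ne_top μ _⟩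
    have hempty : (⋂ M : ℕ, (Metric.ball (0 : Fin d → ℝ) (M:ℝ))ᶜ) = ∅ := by
      rw [← Set.compl_iUnion, Set.compl_empty_iff]
      refine Set.eq_univ_of_forall fun x => ?_
      obtain ⟨M, hM⟩ := exists_nat_gt ‖x‖
      exact Set.mem_iUnion.mpr ⟨M, by simpa [Metric.mem_ball, dist_zero_right] using hM⟩
    rw [hempty] at h1
    simpa [Function.comp_def] using h1
  have hhalf : 0 < δ / 2 := ENNReal.div_pos hδ0 (by norm_num)
  obtain ⟨M₀, hM₀⟩ := (ENNReal.tendsto_nhds_zero.mp hiInter (δ/2) hhalf).exists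
  set F : Set (Fin d → ℝ) := (Metric.ball (0 : Fin d → ℝ) (M₀:ℝ))ᶜ with hFdef
  have hFclosed : IsClosed F := Metric.isOpen_ball.isClosed_compl
  have hFmeas : MeasurableSet F := hFclosed.measurableSet
  have hμF : μ F < δ := lt_of_le_of_lt hM₀ (ENNReal.half_lt_self hδ0 hδt)
  -- limsup bound for ν n F
  have hlimsup : Filter.limsup (fun n => ν n F) atTop ≤ μ F :=
    ProbabilityMeasure.limsup_measure_closed_le_of_tendsto htend hFclosed
  have hνF : ∀ᶠ n in atTop, ν n F < δ :=
    Filter.eventually_lt_of_limsup_lt (lt_of_le_of_lt hlimsup hμF)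
  -- the compact region
  set B : Set (Fin d → ℝ) := Metric.closedBall 0 ((M₀:ℝ) + R) with hBdef
  have hBmeas : MeasurableSet B := Metric.isClosed_closedBall.measurableSet
  have hBvol : volume B ≠ ∞ := (isCompact_closedBall _ _).measure_lt_top.ne
  have hzero : ∀ x ∈ Bᶜ, ∀ y ∉ F, g (x - y) = 0 := by
    intro x hx y hy
    have hxn : (M₀:ℝ) + R < ‖x‖ := by
      simpa [B, Metric.mem_closedBall, dist_zero_right, not_le] using hx
    have hyn : ‖y‖ < (M₀:ℝ) := by
      simpa [F, Metric.mem_ball, dist_zero_right] using hy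
    have : R < ‖x - y‖ := by
      have := norm_sub_norm_le x y
      linarith
    apply image_eq_zero_of_notMem_tsupport
    intro hmem
    have := hR hmem
    rw [Metric.mem_closedBall, dist_zero_right] at this
    linarith
  -- compact part: dominated convergence
  have hDCT : Tendsto (fun n => ∫⁻ x in B,
      (‖(∫ y, g (x - y) ∂(ν n)) - ∫ y, g (x - y) ∂μ‖₊ : ℝ≥0∞) ^ p) atTop (𝓝 0) := by
    have h := tendsto_lintegral_of_dominated_convergence (μ := volume.restrict B)
      (F := fun n x => (‖(∫ y, g (x - y) ∂(ν n)) - ∫ y, g (x - y) ∂μ‖₊ : ℝ≥0∞) ^ p)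
      (f := fun _ => 0) (bound := fun _ => ENNReal.ofReal ((2*C) ^ p))
      (fun n => (((measurable_conv hgm (ν n)).sub (measurable_conv hgm μ)).nnnorm.coe_nnreal_ennreal.pow_const _))
      (fun n => Filter.Eventually.of_forall fun x => ?_) ?_ ?_
    · simpa using h
    · -- bound
      have h1 : ‖(∫ y, g (x - y) ∂(ν n)) - ∫ y, g (x - y) ∂μ‖ ≤ 2*C := by
        refine (norm_sub_le _ _).trans ?_
        have := hconvbd (ν n) x
        have := hconvbd μ x
        linarith [hconvbd (ν n) x, hconvbd μ x]
      beta_reduce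
      rw [← enorm_eq_nnnorm, ← ofReal_norm, ENNReal.ofReal_rpow_of_nonneg (norm_nonneg _) hp0.le]
      exact ENNReal.ofReal_le_ofReal (Real.rpow_le_rpow (norm_nonneg _) h1 hp0.le)
    · -- bound integrable
      rw [lintegral_const]
      exact ENNReal.mul_ne_top ENNReal.ofReal_ne_top (by simpa using hBvol)
    · -- ae convergence
      refine Filter.Eventually.of_forall fun x => ?_
      have h2 : Tendsto (fun n => (∫ y, g (x - y) ∂(ν n)) - ∫ y, g (x - y) ∂μ) atTop (𝓝 0) := by
        simpa using (hpt x).sub_const (∫ y, g (x - y) ∂μ)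
      have h3 : Tendsto (fun n => ‖(∫ y, g (x - y) ∂(ν n)) - ∫ y, g (x - y) ∂μ‖ ^ p)
          atTop (𝓝 0) := by
        have h4 := h2.norm
        rw [norm_zero] at h4
        have h5 := (Real.continuousAt_rpow_const 0 p (Or.inr hp0.le)).tendsto.comp h4
        simpa [Real.zero_rpow (ne_of_gt hp0), Function.comp_def] using h5
      have h6 := ENNReal.tendsto_ofReal h3
      rw [ENNReal.ofReal_zero] at h6
      refine h6.congr fun n => ?_
      beta_reduce
      rw [← enorm_eq_nnnorm, ← ofReal_norm, ENNReal.ofReal_rpow_of_nonneg (norm_nonneg _) hp0.le]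
  have hεq : (0:ℝ≥0∞) < ε/4 := ENNReal.div_pos hε.ne' (by norm_num)
  have hεp : (0:ℝ≥0∞) < (ε/4) ^ p := ENNReal.rpow_pos hεq hεqt
  have hcompact : ∀ᶠ n in atTop, ∫⁻ x in B,
      (‖(∫ y, g (x - y) ∂(ν n)) - ∫ y, g (x - y) ∂μ‖₊ : ℝ≥0∞) ^ p ≤ (ε/4) ^ p :=
    ENNReal.tendsto_nhds_zero.mp hDCT _ hεp
  filter_upwards [hνF, hcompact] with n hn1 hn2
  set D : (Fin d → ℝ) → ℝ := fun x => (∫ y, g (x - y) ∂(ν n)) - ∫ y, g (x - y) ∂μ with hDdef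
  have hDmeas : Measurable D := (measurable_conv hgm (ν n)).sub (measurable_conv hgm μ)
  have hsplit : eLpNorm D (ENNReal.ofReal p) volume
      ≤ eLpNorm (B.indicator D) (ENNReal.ofReal p) volume
        + eLpNorm (Bᶜ.indicator D) (ENNReal.ofReal p) volume := by
    conv_lhs => rw [← Set.indicator_self_add_compl B D]
    exact eLpNorm_add_le (hDmeas.indicator hBmeas).aestronglyMeasurable
      (hDmeas.indicator hBmeas.compl).aestronglyMeasurable hP1
  have hcomp_le : eLpNorm (B.indicator D) (ENNReal.ofReal p) volume ≤ ε/4 := by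
    rw [eLpNorm_indicator_eq_eLpNorm_restrict hBmeas,
      eLpNorm_eq_lintegral_rpow_enorm_toReal hP0 hPt, ENNReal.toReal_ofReal hp0.le]
    calc (∫⁻ x in B, (‖D x‖₊ : ℝ≥0∞) ^ p) ^ (1/p)
        ≤ ((ε/4) ^ p) ^ (1/p) := ENNReal.rpow_le_rpow hn2 (by positivity)
      _ = ε/4 := by
          rw [← ENNReal.rpow_mul, mul_one_div_cancel (ne_of_gt hp0), ENNReal.rpow_one]
  have htail : eLpNorm (Bᶜ.indicator D) (ENNReal.ofReal p) volume ≤ ε/4 + ε/4 := by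
    have hind : Bᶜ.indicator D = (Bᶜ.indicator fun x => ∫ y, g (x - y) ∂(ν n))
        - (Bᶜ.indicator fun x => ∫ y, g (x - y) ∂μ) := by
      funext x
      by_cases hx : x ∈ Bᶜ <;> simp [hx, D]
    rw [hind]
    refine le_trans (eLpNorm_sub_le
      ((measurable_conv hgm (ν n)).indicator hBmeas.compl).aestronglyMeasurable
      ((measurable_conv hgm μ).indicator hBmeas.compl).aestronglyMeasurable hP1) ?_
    have ht1 : eLpNorm (Bᶜ.indicator (fun x => ∫ y, g (x - y) ∂(ν n)))
        (ENNReal.ofReal p) volume ≤ ε/4 := by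
      refine le_trans (eLpNorm_indicator_conv_le hgm (ν n) hFmeas
        (fun x hx y hy => hzero x hx y hy) hp) ?_
      exact le_trans (mul_le_mul_left hn1.le _) hδNpg
    have ht2 : eLpNorm (Bᶜ.indicator (fun x => ∫ y, g (x - y) ∂μ))
        (ENNReal.ofReal p) volume ≤ ε/4 := by
      refine le_trans (eLpNorm_indicator_conv_le hgm μ hFmeas
        (fun x hx y hy => hzero x hx y hy) hp) ?_
      exact le_trans (mul_le_mul_left hμF.le _) hδNpg
    exact add_le_add ht1 ht2
  calc eLpNorm D (ENNReal.ofReal p) volume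
      ≤ ε/4 + (ε/4 + ε/4) := hsplit.trans (add_le_add hcomp_le htail)
    _ ≤ ε/4 + ε/4 + (ε/4 + ε/4) := add_le_add le_add_self le_rfl
    _ = ε/4 * 4 := by ring
    _ = ε := ENNReal.div_mul_cancel (by norm_num) (by norm_num)

set_option maxHeartbeats 1000000 in
lemma tendsto_eLpNorm_conv_Lp
    {f : (Fin d → ℝ) → ℝ} (hf : Measurable f) {p : ℝ} (hp : 1 ≤ p)
    (hfp : eLpNorm f (ENNReal.ofReal p) volume < ∞)
    (μ : Measure (Fin d → ℝ)) (ν : ℕ → Measure (Fin d → ℝ))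
    [IsProbabilityMeasure μ] [∀ n, IsProbabilityMeasure (ν n)]
    (hweak : ∀ φ : BoundedContinuousFunction (Fin d → ℝ) ℝ,
      Tendsto (fun n => ∫ x, φ x ∂(ν n)) atTop (𝓝 (∫ x, φ x ∂μ))) :
    Tendsto (fun n => eLpNorm (fun x => (∫ y, f (x - y) ∂(ν n)) - ∫ y, f (x - y) ∂μ)
      (ENNReal.ofReal p) volume) atTop (𝓝 0) := by
  have hp0 : (0:ℝ) < p := lt_of_lt_of_le zero_lt_one hp
  have hP1 : (1:ℝ≥0∞) ≤ ENNReal.ofReal p := ENNReal.one_le_ofReal.mpr hp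
  have hPt : ENNReal.ofReal p ≠ ∞ := ENNReal.ofReal_ne_top
  refine ENNReal.tendsto_nhds_zero.mpr fun ε hε => ?_
  have hε4 : ε/4 ≠ 0 := by
    simp only [ne_eq, ENNReal.div_eq_zero_iff, not_or]
    exact ⟨hε.ne', by norm_num⟩
  have hε4pos : (0:ℝ≥0∞) < ε/4 := pos_iff_ne_zero.mpr hε4
  obtain ⟨g, hgs, hfg, hgc, hgmem⟩ := MemLp.exists_hasCompactSupport_eLpNorm_sub_le
    (μ := volume) (p := ENNReal.ofReal p) hPt ⟨hf.aestronglyMeasurable, hfp⟩ hε4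
  have hgm : Measurable g := hgc.measurable
  have hfgmem : MemLp (f - g) (ENNReal.ofReal p) volume :=
    MemLp.sub ⟨hf.aestronglyMeasurable, hfp⟩ hgmem
  have hfgp : eLpNorm (fun x => f x - g x) (ENNReal.ofReal p) volume < ∞ := hfgmem.2
  have hfgm : Measurable fun x => f x - g x := hf.sub hgm
  -- integrability of translated g
  have hgint : ∀ (ρ : Measure (Fin d → ℝ)) [IsFiniteMeasure ρ], ∀ x : Fin d → ℝ,
      Integrable (fun y => g (x - y)) ρ := by
    intro ρ _ x
    obtain ⟨C, hC⟩ := hgs.exists_bound_of_continuous hgc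
    exact (integrable_const C).mono'
      ((hgm.comp (measurable_const.sub measurable_id)).aestronglyMeasurable)
      (Filter.Eventually.of_forall fun y => hC _)
  -- a.e. decomposition
  have hae : ∀ (ρ : Measure (Fin d → ℝ)) [IsProbabilityMeasure ρ],
      ∀ᵐ x : (Fin d → ℝ) ∂volume,
      (∫ y, f (x - y) ∂ρ) - (∫ y, g (x - y) ∂ρ) = ∫ y, f (x - y) - g (x - y) ∂ρ := by
    intro ρ _
    filter_upwards [ae_integrable_conv hf hp hfp ρ] with x hx
    rw [integral_sub hx (hgint ρ x)]
  -- the compact part tends to zero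
  have hcomp := ENNReal.tendsto_nhds_zero.mp
    (tendsto_eLpNorm_conv_compact hgc hgs hp μ ν hweak) (ε/4) hε4pos
  filter_upwards [hcomp] with n hn
  -- a.e. equality decomposition
  have haeq : (fun x => (∫ y, f (x - y) ∂(ν n)) - ∫ y, f (x - y) ∂μ)
      =ᵐ[volume] fun x => ((∫ y, f (x - y) - g (x - y) ∂(ν n))
        + ((∫ y, g (x - y) ∂(ν n)) - ∫ y, g (x - y) ∂μ))
        - ∫ y, f (x - y) - g (x - y) ∂μ := by
    filter_upwards [hae (ν n), hae μ] with x h1 h2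
    rw [← h1, ← h2]
    ring
  rw [eLpNorm_congr_ae haeq]
  have hm1 : Measurable fun x => ∫ y, f (x - y) - g (x - y) ∂(ν n) :=
    measurable_conv hfgm (ν n)
  have hm2 : Measurable fun x => (∫ y, g (x - y) ∂(ν n)) - ∫ y, g (x - y) ∂μ :=
    (measurable_conv hgm (ν n)).sub (measurable_conv hgm μ)
  have hm3 : Measurable fun x => ∫ y, f (x - y) - g (x - y) ∂μ := measurable_conv hfgm μ
  have hstep : eLpNorm (fun x => ((∫ y, f (x - y) - g (x - y) ∂(ν n))
        + ((∫ y, g (x - y) ∂(ν n)) - ∫ y, g (x - y) ∂μ))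
        - ∫ y, f (x - y) - g (x - y) ∂μ) (ENNReal.ofReal p) volume
      ≤ (eLpNorm (fun x => ∫ y, f (x - y) - g (x - y) ∂(ν n)) (ENNReal.ofReal p) volume
          + eLpNorm (fun x => (∫ y, g (x - y) ∂(ν n)) - ∫ y, g (x - y) ∂μ)
              (ENNReal.ofReal p) volume)
        + eLpNorm (fun x => ∫ y, f (x - y) - g (x - y) ∂μ) (ENNReal.ofReal p) volume := by
    refine le_trans (eLpNorm_sub_le (f := fun x => (∫ y, f (x - y) - g (x - y) ∂(ν n))
        + ((∫ y, g (x - y) ∂(ν n)) - ∫ y, g (x - y) ∂μ))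
      (hm1.add hm2).aestronglyMeasurable hm3.aestronglyMeasurable hP1) ?_
    refine add_le_add_left ?_ _
    exact eLpNorm_add_le hm1.aestronglyMeasurable hm2.aestronglyMeasurable hP1
  refine le_trans hstep ?_
  have hb1 : eLpNorm (fun x => ∫ y, f (x - y) - g (x - y) ∂(ν n))
      (ENNReal.ofReal p) volume ≤ ε/4 := by
    refine le_trans (eLpNorm_conv_le hfgm (ν n) hp) ?_
    rw [measure_univ, one_mul]
    exact le_trans (le_of_eq (by rfl)) hfg
  have hb3 : eLpNorm (fun x => ∫ y, f (x - y) - g (x - y) ∂μ)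
      (ENNReal.ofReal p) volume ≤ ε/4 := by
    refine le_trans (eLpNorm_conv_le hfgm μ hp) ?_
    rw [measure_univ, one_mul]
    exact le_trans (le_of_eq (by rfl)) hfg
  calc (eLpNorm (fun x => ∫ y, f (x - y) - g (x - y) ∂(ν n)) (ENNReal.ofReal p) volume
          + eLpNorm (fun x => (∫ y, g (x - y) ∂(ν n)) - ∫ y, g (x - y) ∂μ)
              (ENNReal.ofReal p) volume)
        + eLpNorm (fun x => ∫ y, f (x - y) - g (x - y) ∂μ) (ENNReal.ofReal p) volume
      ≤ (ε/4 + ε/4) + ε/4 := add_le_add (add_le_add hb1 hn) hb3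
    _ ≤ (ε/4 + ε/4) + (ε/4 + ε/4) := add_le_add le_rfl le_add_self
    _ = ε/4 * 4 := by ring
    _ = ε := ENNReal.div_mul_cancel (by norm_num) (by norm_num)

lemma measurable_eLpNorm_param {F : ℝ → (Fin d → ℝ) → ℝ}
    (hF : Measurable fun z : ℝ × (Fin d → ℝ) => F z.1 z.2) {p : ℝ} (hp : 1 ≤ p) :
    Measurable fun t => eLpNorm (F t) (ENNReal.ofReal p) volume := by
  have hp0 : (0:ℝ) < p := lt_of_lt_of_le zero_lt_one hp
  have hP0 : ENNReal.ofReal p ≠ 0 := by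
    simp only [ne_eq, ENNReal.ofReal_eq_zero, not_le]; linarith
  have heq : (fun t => eLpNorm (F t) (ENNReal.ofReal p) volume)
      = fun t => (∫⁻ x, (‖F t x‖₊ : ℝ≥0∞) ^ p) ^ (1/p) := by
    funext t
    rw [eLpNorm_eq_lintegral_rpow_enorm_toReal hP0 ENNReal.ofReal_ne_top, ENNReal.toReal_ofReal hp0.le]
    rfl
  rw [heq]
  exact ((hF.nnnorm.coe_nnreal_ennreal.pow_const p).lintegral_prod_right').pow_const _

lemma tendsto_rpow_zero {u : ℕ → ℝ≥0∞} (h : Tendsto u atTop (𝓝 0)) {q : ℝ} (hq : 0 < q) :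
    Tendsto (fun n => u n ^ q) atTop (𝓝 0) := by
  refine ENNReal.tendsto_nhds_zero.mpr fun η hη => ?_
  by_cases hηt : η = ∞
  · exact Filter.Eventually.of_forall fun n => hηt ▸ le_top
  have h1 : (0:ℝ≥0∞) < η ^ (1/q) := ENNReal.rpow_pos hη hηt
  filter_upwards [ENNReal.tendsto_nhds_zero.mp h _ h1] with n hn
  calc u n ^ q ≤ (η ^ (1/q)) ^ q := ENNReal.rpow_le_rpow hn hq.le
    _ = η := by rw [← ENNReal.rpow_mul, one_div_mul_cancel hq.ne', ENNReal.rpow_one]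

end Stmt15

set_option maxHeartbeats 2000000

/-- Stability of convolutions in mixed norms: if `b^n → b` in `L^q([0,T];L^p(ℝ^d))` and
`μ^n_t ⇀ μ_t` weakly for every `t`, then `b^n_t ∗ μ^n_t → b_t ∗ μ_t` in
`L^q([0,T];L^p(ℝ^d))`. -/
theorem stmt_15 (d : ℕ) (T p q : ℝ) (hT : 0 < T) (hp : 1 ≤ p) (hq : 1 ≤ q)
    (b : ℝ → (Fin d → ℝ) → ℝ) (bn : ℕ → ℝ → (Fin d → ℝ) → ℝ)
    (hbmeas : Measurable fun z : ℝ × (Fin d → ℝ) => b z.1 z.2)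
    (hbnmeas : ∀ n, Measurable fun z : ℝ × (Fin d → ℝ) => bn n z.1 z.2)
    (hbmem : (∫⁻ t in Set.Icc (0:ℝ) T,
        (eLpNorm (b t) (ENNReal.ofReal p) volume) ^ q) ^ (1 / q) < ⊤)
    (hconv : Tendsto (fun n =>
        (∫⁻ t in Set.Icc (0:ℝ) T,
          (eLpNorm (fun x => bn n t x - b t x) (ENNReal.ofReal p) volume) ^ q) ^ (1 / q))
      atTop (𝓝 0))
    (μ : ℝ → Measure (Fin d → ℝ)) (μn : ℕ → ℝ → Measure (Fin d → ℝ))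
    (hμprob : ∀ t, IsProbabilityMeasure (μ t))
    (hμnprob : ∀ n t, IsProbabilityMeasure (μn n t))
    (hμmeas : Measurable μ) (hμnmeas : ∀ n, Measurable (μn n))
    (hweak : ∀ t ∈ Set.Icc (0:ℝ) T, ∀ g : BoundedContinuousFunction (Fin d → ℝ) ℝ,
      Tendsto (fun n => ∫ x, g x ∂(μn n t)) atTop (𝓝 (∫ x, g x ∂(μ t)))) :
    Tendsto (fun n =>
        (∫⁻ t in Set.Icc (0:ℝ) T,
          (eLpNorm (fun x => (∫ y, bn n t (x - y) ∂(μn n t)) - ∫ y, b t (x - y) ∂(μ t))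
            (ENNReal.ofReal p) volume) ^ q) ^ (1 / q))
      atTop (𝓝 0) := by
  have hq0 : (0:ℝ) < q := lt_of_lt_of_le zero_lt_one hq
  have hp0 : (0:ℝ) < p := lt_of_lt_of_le zero_lt_one hp
  have hP1 : (1:ℝ≥0∞) ≤ ENNReal.ofReal p := ENNReal.one_le_ofReal.mpr hp
  -- section measurability
  have hbsec : ∀ t, Measurable (b t) := fun t => hbmeas.comp measurable_prodMk_left
  have hbnsec : ∀ n t, Measurable (bn n t) := fun n t => (hbnmeas n).comp measurable_prodMk_left
  -- measurability in t of the various eLpNorms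
  have hGmeas : ∀ n, Measurable fun t =>
      eLpNorm (fun x => (∫ y, b t (x - y) ∂(μn n t)) - ∫ y, b t (x - y) ∂(μ t))
        (ENNReal.ofReal p) volume := by
    intro n
    exact Stmt15.measurable_eLpNorm_param
      ((Stmt15.measurable_conv2 hbmeas (hμnmeas n) (hμnprob n)).sub
        (Stmt15.measurable_conv2 hbmeas hμmeas hμprob)) hp
  have hFmeas : ∀ n, Measurable fun t =>
      eLpNorm (fun x => bn n t x - b t x) (ENNReal.ofReal p) volume := fun n =>
    Stmt15.measurable_eLpNorm_param ((hbnmeas n).sub hbmeas) hp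
  have hbnorm : Measurable fun t => eLpNorm (b t) (ENNReal.ofReal p) volume :=
    Stmt15.measurable_eLpNorm_param hbmeas hp
  -- finiteness of the mixed norm of b
  have hXfin : (∫⁻ t in Set.Icc (0:ℝ) T,
      (eLpNorm (b t) (ENNReal.ofReal p) volume) ^ q) ≠ ∞ := by
    intro h
    rw [h, ENNReal.top_rpow_of_pos (by positivity)] at hbmem
    exact absurd hbmem (lt_irrefl _)
  have hbfin : ∀ᵐ t ∂(volume.restrict (Set.Icc (0:ℝ) T)),
      eLpNorm (b t) (ENNReal.ofReal p) volume < ∞ := by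
    filter_upwards [ae_lt_top (hbnorm.pow_const q) hXfin] with t ht
    by_contra hc
    rw [not_lt, top_le_iff] at hc
    rw [hc, ENNReal.top_rpow_of_pos hq0] at ht
    exact absurd ht (lt_irrefl _)
  -- pointwise (in t) comparison
  have hbound : ∀ n,
      (∫⁻ t in Set.Icc (0:ℝ) T,
          (eLpNorm (fun x => (∫ y, bn n t (x - y) ∂(μn n t)) - ∫ y, b t (x - y) ∂(μ t))
            (ENNReal.ofReal p) volume) ^ q) ^ (1 / q)
      ≤ (∫⁻ t in Set.Icc (0:ℝ) T,
            (eLpNorm (fun x => bn n t x - b t x) (ENNReal.ofReal p) volume) ^ q) ^ (1 / q)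
        + (∫⁻ t in Set.Icc (0:ℝ) T,
            (eLpNorm (fun x => (∫ y, b t (x - y) ∂(μn n t)) - ∫ y, b t (x - y) ∂(μ t))
              (ENNReal.ofReal p) volume) ^ q) ^ (1 / q) := by
    intro n
    have hae1 : ∀ᵐ t ∂(volume.restrict (Set.Icc (0:ℝ) T)),
        eLpNorm (fun x => (∫ y, bn n t (x - y) ∂(μn n t)) - ∫ y, b t (x - y) ∂(μ t))
            (ENNReal.ofReal p) volume
          ≤ eLpNorm (fun x => bn n t x - b t x) (ENNReal.ofReal p) volume
            + eLpNorm (fun x => (∫ y, b t (x - y) ∂(μn n t)) - ∫ y, b t (x - y) ∂(μ t))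
                (ENNReal.ofReal p) volume := by
      filter_upwards [hbfin] with t hbt
      haveI := hμnprob n t
      haveI := hμprob t
      by_cases hbn : eLpNorm (fun x => bn n t x - b t x) (ENNReal.ofReal p) volume = ∞
      · rw [hbn, top_add]
        exact le_top
      have hbnt : eLpNorm (bn n t) (ENNReal.ofReal p) volume < ∞ := by
        have m1 : MemLp (fun x => bn n t x - b t x) (ENNReal.ofReal p) volume :=
          ⟨((hbnsec n t).sub (hbsec t)).aestronglyMeasurable, lt_top_iff_ne_top.mpr hbn⟩
        have m2 : MemLp (b t) (ENNReal.ofReal p) volume := ⟨(hbsec t).aestronglyMeasurable, hbt⟩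
        have m3 := m1.add m2
        have hfe : ((fun x => bn n t x - b t x) + b t) = bn n t := by
          funext x
          simp only [Pi.add_apply]
          ring
        rw [hfe] at m3
        exact m3.2
      have heq : (fun x => (∫ y, bn n t (x - y) ∂(μn n t)) - ∫ y, b t (x - y) ∂(μn n t))
          =ᵐ[volume] fun x => ∫ y, bn n t (x - y) - b t (x - y) ∂(μn n t) := by
        filter_upwards [Stmt15.ae_integrable_conv (hbnsec n t) hp hbnt (μn n t),
          Stmt15.ae_integrable_conv (hbsec t) hp hbt (μn n t)] with x h1 h2
        exact (integral_sub h1 h2).symm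
      have hfuneq : (fun x => (∫ y, bn n t (x - y) ∂(μn n t)) - ∫ y, b t (x - y) ∂(μ t))
          = fun x => ((∫ y, bn n t (x - y) ∂(μn n t)) - ∫ y, b t (x - y) ∂(μn n t))
              + ((∫ y, b t (x - y) ∂(μn n t)) - ∫ y, b t (x - y) ∂(μ t)) := by
        funext x
        ring
      rw [hfuneq]
      refine le_trans (eLpNorm_add_le
        (((Stmt15.measurable_conv (hbnsec n t) (μn n t)).sub
          (Stmt15.measurable_conv (hbsec t) (μn n t))).aestronglyMeasurable)
        (((Stmt15.measurable_conv (hbsec t) (μn n t)).sub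
          (Stmt15.measurable_conv (hbsec t) (μ t))).aestronglyMeasurable) hP1) ?_
      refine add_le_add_left ?_ _
      rw [eLpNorm_congr_ae heq]
      have hyoung := Stmt15.eLpNorm_conv_le (f := fun x => bn n t x - b t x)
        ((hbnsec n t).sub (hbsec t)) (μn n t) hp
      simpa [measure_univ, one_mul] using hyoung
    calc (∫⁻ t in Set.Icc (0:ℝ) T,
          (eLpNorm (fun x => (∫ y, bn n t (x - y) ∂(μn n t)) - ∫ y, b t (x - y) ∂(μ t))
            (ENNReal.ofReal p) volume) ^ q) ^ (1 / q)
        ≤ (∫⁻ t in Set.Icc (0:ℝ) T,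
            (((fun t => eLpNorm (fun x => bn n t x - b t x) (ENNReal.ofReal p) volume)
              + fun t => eLpNorm
                  (fun x => (∫ y, b t (x - y) ∂(μn n t)) - ∫ y, b t (x - y) ∂(μ t))
                  (ENNReal.ofReal p) volume) t) ^ q) ^ (1 / q) := by
          refine ENNReal.rpow_le_rpow (lintegral_mono_ae (hae1.mono fun t ht => ?_))
            (by positivity)
          exact ENNReal.rpow_le_rpow ht hq0.le
      _ ≤ _ := ENNReal.lintegral_Lp_add_le (hFmeas n).aemeasurable (hGmeas n).aemeasurable hq
  -- the second term tends to zero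
  have hT2 : Tendsto (fun n => (∫⁻ t in Set.Icc (0:ℝ) T,
      (eLpNorm (fun x => (∫ y, b t (x - y) ∂(μn n t)) - ∫ y, b t (x - y) ∂(μ t))
        (ENNReal.ofReal p) volume) ^ q) ^ (1 / q)) atTop (𝓝 0) := by
    have hDCT := tendsto_lintegral_of_dominated_convergence
      (μ := volume.restrict (Set.Icc (0:ℝ) T))
      (F := fun n t => (eLpNorm (fun x => (∫ y, b t (x - y) ∂(μn n t))
          - ∫ y, b t (x - y) ∂(μ t)) (ENNReal.ofReal p) volume) ^ q)
      (f := fun _ => 0)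
      (bound := fun t => 2 ^ q * (eLpNorm (b t) (ENNReal.ofReal p) volume) ^ q)
      (fun n => (hGmeas n).pow_const q) ?_ ?_ ?_
    · have h0 : (∫⁻ _ in Set.Icc (0:ℝ) T, (0:ℝ≥0∞)) = 0 := by simp
      rw [h0] at hDCT
      exact Stmt15.tendsto_rpow_zero hDCT (by positivity)
    · -- bound
      intro n
      refine Filter.Eventually.of_forall fun t => ?_
      haveI := hμnprob n t
      haveI := hμprob t
      have h1 : eLpNorm (fun x => (∫ y, b t (x - y) ∂(μn n t)) - ∫ y, b t (x - y) ∂(μ t))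
          (ENNReal.ofReal p) volume
          ≤ 2 * eLpNorm (b t) (ENNReal.ofReal p) volume := by
        refine le_trans (eLpNorm_sub_le
          (Stmt15.measurable_conv (hbsec t) (μn n t)).aestronglyMeasurable
          (Stmt15.measurable_conv (hbsec t) (μ t)).aestronglyMeasurable hP1) ?_
        have h2 := Stmt15.eLpNorm_conv_le (hbsec t) (μn n t) hp
        have h3 := Stmt15.eLpNorm_conv_le (hbsec t) (μ t) hp
        rw [measure_univ, one_mul] at h2 h3
        rw [two_mul]
        exact add_le_add h2 h3
      calc (eLpNorm (fun x => (∫ y, b t (x - y) ∂(μn n t)) - ∫ y, b t (x - y) ∂(μ t))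
            (ENNReal.ofReal p) volume) ^ q
          ≤ (2 * eLpNorm (b t) (ENNReal.ofReal p) volume) ^ q :=
            ENNReal.rpow_le_rpow h1 hq0.le
        _ = 2 ^ q * (eLpNorm (b t) (ENNReal.ofReal p) volume) ^ q :=
            ENNReal.mul_rpow_of_nonneg _ _ hq0.le
    · -- bound integrable
      rw [lintegral_const_mul _ (hbnorm.pow_const q)]
      exact ENNReal.mul_ne_top (ENNReal.rpow_ne_top_of_nonneg hq0.le (by norm_num)) hXfin
    · -- ae convergence
      filter_upwards [hbfin, ae_restrict_mem measurableSet_Icc] with t hbt htmem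
      haveI := hμprob t
      haveI : ∀ n, IsProbabilityMeasure (μn n t) := fun n => hμnprob n t
      have hw : ∀ φ : BoundedContinuousFunction (Fin d → ℝ) ℝ,
          Tendsto (fun n => ∫ x, φ x ∂(μn n t)) atTop (𝓝 (∫ x, φ x ∂(μ t))) :=
        fun φ => hweak t htmem φ
      have := Stmt15.tendsto_eLpNorm_conv_Lp (hbsec t) hp hbt (μ t) (fun n => μn n t) hw
      exact Stmt15.tendsto_rpow_zero this hq0
  -- combine
  have hsum := hconv.add hT2
  rw [add_zero] at hsum
  refine tendsto_of_tendsto_of_tendsto_of_le_of_le tendsto_const_nhds hsum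
    (fun n => zero_le) hbound
end

section
/- Let (Ω,F,P) be a probability space, ξ : Ω → ℝ^d a random variable with law admitting a density ρ ∈ L^r(ℝ^d) for some r ∈ (1,∞), W : Ω → ℝ^d a random variable independent of ξ, and X : Ω → ℝ^d another random variable. Suppose there is a probability measure Q equivalent to P with Law_Q(X) = Law_P(ξ + W) and E_Q[(dP/dQ)^m] < ∞ for every m ≥ 1. Then for every r̃ ∈ (1,r) the law of X under P has a density in L^{r̃}(ℝ^d), with ‖Law_P(X)‖_{L^{r̃}} ≤ C(ε) ‖ρ‖_{L^r}^{1/(1+ε)} where ε > 0 is chosen so that r'(1+ε) = r̃' (r', r̃' conjugate exponents) and C(ε) depends on the (1+1/ε)-moment of dP/dQ under Q. -/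
open MeasureTheory Filter Set
open scoped ENNReal NNReal Topology

lemma selfimp (I C : ℝ≥0∞) (θ : ℝ) (hI : I ≠ ⊤) (h0 : 0 ≤ θ) (h1 : θ < 1)
    (h : I ≤ I ^ θ * C) : I ^ (1 - θ) ≤ C := by
  rcases eq_or_ne I 0 with h0' | hne
  · subst h0'
    rw [ENNReal.zero_rpow_of_pos (by linarith)]
    exact zero_le
  · have hθt : I ^ θ ≠ ⊤ := (ENNReal.rpow_lt_top_of_nonneg h0 hI).ne
    have hθ0 : I ^ θ ≠ 0 := by
      simp [ENNReal.rpow_eq_zero_iff, hne, hI]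
    have : I ^ (1 - θ) = I ^ (1:ℝ) * I ^ (-θ) := by
      rw [← ENNReal.rpow_add _ _ hne hI]; ring_nf
    rw [this, ENNReal.rpow_one]
    calc I * I ^ (-θ) ≤ (I ^ θ * C) * I ^ (-θ) :=
          mul_le_mul_left h _
      _ = C * (I ^ θ * I ^ (-θ)) := by ring
      _ = C := by
          rw [← ENNReal.rpow_add _ _ hne hI]
          simp

/-- Propagation of integrability of the law via a Girsanov-type change of measure:
if `ξ` has density `ρ ∈ L^r`, `W` is independent of `ξ` under `P`, and `Q ∼ P` is such
that `Law_Q(X) = Law_P(ξ + W)` with all moments of `dP/dQ` finite under `Q`, then for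
every `rr ∈ (1,r)` the law of `X` under `P` has a density in `L^{rr}`, with the explicit
bound `‖Law_P(X)‖_{L^{rr}} ≤ E_Q[(dP/dQ)^{1+1/ε}]^{ε/(1+ε)} ‖ρ‖_{L^r}^{1/(1+ε)}`
where `1 + ε = rr(r−1)/(r(rr−1))` (i.e. `r'(1+ε) = rr'` for the conjugate exponents). -/
theorem stmt_16 (d : ℕ) {Ω : Type*} [MeasurableSpace Ω]
    (P Q : Measure Ω) [IsProbabilityMeasure P] [IsProbabilityMeasure Q]
    (hPQ : P ≪ Q) (hQP : Q ≪ P)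
    (ξ W X : Ω → (Fin d → ℝ))
    (hξ : Measurable ξ) (hW : Measurable W) (hX : Measurable X)
    (hind : ProbabilityTheory.IndepFun ξ W P)
    (r : ℝ) (hr1 : 1 < r)
    (ρ : (Fin d → ℝ) → ℝ) (hρ0 : ∀ x, 0 ≤ ρ x)
    (hρ : MemLp ρ (ENNReal.ofReal r) volume)
    (hlaw : P.map ξ = volume.withDensity (fun x => ENNReal.ofReal (ρ x)))
    (hlawX : Q.map X = P.map (fun ω => ξ ω + W ω))
    (hmom : ∀ m : ℕ, ∫⁻ ω, (P.rnDeriv Q ω) ^ m ∂Q < ⊤) :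
    ∀ rr : ℝ, 1 < rr → rr < r →
      P.map X ≪ volume ∧
      eLpNorm (fun x => ((P.map X).rnDeriv volume x).toReal)
          (ENNReal.ofReal rr) volume
        ≤ (∫⁻ ω, (P.rnDeriv Q ω)
              ^ (1 + 1 / (rr * (r - 1) / (r * (rr - 1)) - 1)) ∂Q)
            ^ ((rr * (r - 1) / (r * (rr - 1)) - 1) / (rr * (r - 1) / (r * (rr - 1))))
          * (eLpNorm ρ (ENNReal.ofReal r) volume)
            ^ (r * (rr - 1) / (rr * (r - 1))) := by
  intro rr hrr1 hrrr
  have hr0 : (0:ℝ) < r := by linarith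
  have hrr0 : (0:ℝ) < rr := by linarith
  have hr1' : (0:ℝ) < r - 1 := by linarith
  have hrr1' : (0:ℝ) < rr - 1 := by linarith
  -- conjugate exponent of r
  set r' : ℝ := r / (r - 1) with hr'def
  have hconj : r.HolderConjugate r' := Real.HolderConjugate.conjExponent hr1
  have hr'0 : (0:ℝ) < r' := hconj.symm.pos
  -- the exponent e = 1 + ε
  set e : ℝ := rr * (r - 1) / (r * (rr - 1)) with hedef
  have he1 : 1 < e := by
    rw [hedef, lt_div_iff₀ (by positivity)]
    nlinarith
  have he0 : (0:ℝ) < e := by linarith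
  set e' : ℝ := e / (e - 1) with he'def
  have hconje : e.HolderConjugate e' := Real.HolderConjugate.conjExponent he1
  have he'0 : (0:ℝ) < e' := hconje.symm.pos
  -- identities between statement exponents and ours
  have hexp1 : 1 + 1 / (rr * (r - 1) / (r * (rr - 1)) - 1) = e' := by
    rw [he'def, ← hedef]
    have h : e - 1 ≠ 0 := by linarith
    field_simp; ring
  have hexp2 : (rr * (r - 1) / (r * (rr - 1)) - 1) / (rr * (r - 1) / (r * (rr - 1)))
      = 1 / e' := by
    rw [he'def, ← hedef, one_div_div]
  have hexp3 : r * (rr - 1) / (rr * (r - 1)) = 1 / e := by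
    rw [hedef, one_div_div]
  -- key algebraic identities
  have hkey1 : (rr - 1) * e * r' = rr := by
    rw [hedef, hr'def]; field_simp
  have hkey2 : 1 / r' * (1 / e) = (rr - 1) / rr := by
    rw [hedef, hr'def]; field_simp
  -- basic measures and densities
  set Z : Ω → ℝ≥0∞ := P.rnDeriv Q with hZdef
  have hZmeas : Measurable Z := Measure.measurable_rnDeriv _ _
  have hPZ : Q.withDensity Z = P := Measure.withDensity_rnDeriv_eq _ _ hPQ
  set A : ℝ≥0∞ := (∫⁻ x, ENNReal.ofReal (ρ x) ^ r ∂volume) ^ (1 / r) with hAdef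
  set M : ℝ≥0∞ := ∫⁻ ω, Z ω ^ e' ∂Q with hMdef
  have hρae : AEMeasurable ρ (volume : Measure (Fin d → ℝ)) :=
    hρ.aestronglyMeasurable.aemeasurable
  -- A equals the eLpNorm of ρ
  have hA_eq : A = eLpNorm ρ (ENNReal.ofReal r) volume := by
    rw [eLpNorm_eq_lintegral_rpow_enorm_toReal (by simp only [ne_eq, ENNReal.ofReal_eq_zero, not_le]; linarith)
      ENNReal.ofReal_ne_top, ENNReal.toReal_ofReal hr0.le, hAdef]
    congr 1
    refine lintegral_congr fun x => ?_
    rw [← ofReal_norm_eq_enorm, Real.norm_of_nonneg (hρ0 x)]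
  -- Key Step A : integral bound for Q.map X
  have keyA : ∀ g : (Fin d → ℝ) → ℝ≥0∞, Measurable g →
      ∫⁻ x, g x ∂(Q.map X) ≤ (∫⁻ x, g x ^ r' ∂volume) ^ (1 / r') * A := by
    intro g hg
    rw [hlawX, lintegral_map hg (show Measurable (fun ω => ξ ω + W ω) from hξ.add hW)]
    have hprod : P.map (fun ω => (ξ ω, W ω)) = (P.map ξ).prod (P.map W) :=
      (ProbabilityTheory.indepFun_iff_map_prod_eq_prod_map_map hξ.aemeasurable
        hW.aemeasurable).mp hind
    have h1 : ∫⁻ ω, g (ξ ω + W ω) ∂P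
        = ∫⁻ p : (Fin d → ℝ) × (Fin d → ℝ), g (p.1 + p.2)
            ∂((P.map ξ).prod (P.map W)) := by
      rw [← hprod, lintegral_map
        (show Measurable fun p : (Fin d → ℝ) × (Fin d → ℝ) => g (p.1 + p.2) from
          hg.comp (measurable_fst.add measurable_snd)) (hξ.prodMk hW)]
    rw [h1, lintegral_prod_symm' _
      (show Measurable fun p : (Fin d → ℝ) × (Fin d → ℝ) => g (p.1 + p.2) from
        hg.comp (measurable_fst.add measurable_snd))]
    haveI : IsProbabilityMeasure (P.map W) := Measure.isProbabilityMeasure_map hW.aemeasurable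
    calc ∫⁻ w, ∫⁻ x, g (x + w) ∂(P.map ξ) ∂(P.map W)
        ≤ ∫⁻ _, (∫⁻ x, g x ^ r' ∂volume) ^ (1 / r') * A ∂(P.map W) := by
          refine lintegral_mono fun w => ?_
          rw [hlaw, lintegral_withDensity_eq_lintegral_mul₀
            (by exact (ENNReal.measurable_ofReal.comp_aemeasurable hρae))
            (show AEMeasurable (fun x => g (x + w)) volume from
              (hg.comp (measurable_id.add_const w)).aemeasurable)]
          have := ENNReal.lintegral_mul_le_Lp_mul_Lq volume hconj.symm
            (f := fun x => g (x + w)) (g := fun x => ENNReal.ofReal (ρ x))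
            (show AEMeasurable (fun x => g (x + w)) volume from
              (hg.comp (measurable_id.add_const w)).aemeasurable)
            (ENNReal.measurable_ofReal.comp_aemeasurable hρae)
          calc ∫⁻ x, ENNReal.ofReal (ρ x) * g (x + w) ∂volume
              = ∫⁻ x, g (x + w) * ENNReal.ofReal (ρ x) ∂volume := by
                simp_rw [mul_comm]
            _ ≤ (∫⁻ x, g (x + w) ^ r' ∂volume) ^ (1 / r')
                * (∫⁻ x, ENNReal.ofReal (ρ x) ^ r ∂volume) ^ (1 / r) := this
            _ = (∫⁻ x, g x ^ r' ∂volume) ^ (1 / r') * A := by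
                rw [lintegral_add_right_eq_self (fun x => g x ^ r') w]
      _ = (∫⁻ x, g x ^ r' ∂volume) ^ (1 / r') * A := by
          rw [lintegral_const, measure_univ, mul_one]
  -- absolute continuity
  have hQX : Q.map X ≪ volume := by
    refine Measure.AbsolutelyContinuous.mk fun s hs hs0 => ?_
    have := keyA (s.indicator 1) (measurable_one.indicator hs)
    rw [lintegral_indicator_one hs] at this
    refine le_antisymm (this.trans_eq ?_) zero_le
    have : ∫⁻ x, s.indicator (1 : (Fin d → ℝ) → ℝ≥0∞) x ^ r' ∂volume = 0 := by
      have hpt : ∀ x, s.indicator (1 : (Fin d → ℝ) → ℝ≥0∞) x ^ r' = s.indicator 1 x := by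
        intro x; by_cases hx : x ∈ s <;> simp [hx, ENNReal.zero_rpow_of_pos hr'0]
      calc ∫⁻ x, s.indicator (1 : (Fin d → ℝ) → ℝ≥0∞) x ^ r' ∂volume
          = ∫⁻ x, s.indicator 1 x ∂volume := lintegral_congr hpt
        _ = volume s := lintegral_indicator_one hs
        _ = 0 := hs0
    rw [this, ENNReal.zero_rpow_of_pos (by positivity), zero_mul]
  have hPX : P.map X ≪ volume := (hPQ.map hX).trans hQX
  refine ⟨hPX, ?_⟩
  -- the density of P.map X
  haveI : IsProbabilityMeasure (P.map X) := Measure.isProbabilityMeasure_map hX.aemeasurable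
  set h : (Fin d → ℝ) → ℝ≥0∞ := (P.map X).rnDeriv volume with hhdef
  have hhmeas : Measurable h := Measure.measurable_rnDeriv _ _
  have hPXd : volume.withDensity h = P.map X := Measure.withDensity_rnDeriv_eq _ _ hPX
  set B : ℝ≥0∞ := A ^ (1 / e) * M ^ (1 / e') with hBdef
  -- truncations
  have main : ∀ n : ℕ, (∫⁻ x, min (h x) n ^ rr ∂volume) ≤ B ^ rr := by
    intro n
    set hn : (Fin d → ℝ) → ℝ≥0∞ := fun x => min (h x) n with hndef
    have hnmeas : Measurable hn := hhmeas.min measurable_const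
    set I : ℝ≥0∞ := ∫⁻ x, hn x ^ rr ∂volume with hIdef
    -- finiteness of I
    have hIfin : I ≠ ⊤ := by
      have hb : ∀ x, hn x ^ rr ≤ (n : ℝ≥0∞) ^ (rr - 1) * h x := by
        intro x
        rcases eq_or_ne (hn x) 0 with h0 | h0
        · rw [h0, ENNReal.zero_rpow_of_pos hrr0]; exact zero_le
        · have hnt : hn x ≠ ⊤ := (min_le_right _ _).trans_lt (by simp) |>.ne
          calc hn x ^ rr = hn x ^ (rr - 1 + 1) := by norm_num
            _ = hn x ^ (rr - 1) * hn x ^ (1:ℝ) := ENNReal.rpow_add _ _ h0 hnt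
            _ ≤ (n : ℝ≥0∞) ^ (rr - 1) * h x := by
                rw [ENNReal.rpow_one]
                exact mul_le_mul' (ENNReal.rpow_le_rpow (min_le_right _ _)
                  (by linarith)) (min_le_left _ _)
      refine ne_top_of_le_ne_top ?_ ((lintegral_mono hb).trans_eq
        (lintegral_const_mul _ hhmeas))
      refine ENNReal.mul_ne_top (ENNReal.rpow_lt_top_of_nonneg (by linarith)
        (by simp)).ne ?_
      exact ((Measure.lintegral_rnDeriv_le).trans_lt (by simp [measure_univ])).ne
    -- the main chain
    have chain : I ≤ I ^ ((rr - 1) / rr) * B := by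
      have step1 : I ≤ ∫⁻ x, hn x ^ (rr - 1) * h x ∂volume := by
        refine lintegral_mono fun x => ?_
        rcases eq_or_ne (hn x) 0 with h0 | h0
        · rw [h0, ENNReal.zero_rpow_of_pos hrr0]; exact zero_le
        · have hnt : hn x ≠ ⊤ := (min_le_right _ _).trans_lt (by simp) |>.ne
          calc hn x ^ rr = hn x ^ (rr - 1 + 1) := by norm_num
            _ = hn x ^ (rr - 1) * hn x ^ (1:ℝ) := ENNReal.rpow_add _ _ h0 hnt
            _ ≤ hn x ^ (rr - 1) * h x := by
                rw [ENNReal.rpow_one]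
                exact mul_le_mul_right (min_le_left _ _) _
      have step2 : ∫⁻ x, hn x ^ (rr - 1) * h x ∂volume
          = ∫⁻ ω, hn (X ω) ^ (rr - 1) ∂P := by
        have e1 : ∫⁻ ω, hn (X ω) ^ (rr - 1) ∂P
            = ∫⁻ x, hn x ^ (rr - 1) ∂(P.map X) :=
          (lintegral_map (hnmeas.pow_const _) hX).symm
        rw [e1, ← hPXd, lintegral_withDensity_eq_lintegral_mul _ hhmeas
          (hnmeas.pow_const _)]
        exact lintegral_congr fun x => (mul_comm _ _)
      have step3 : ∫⁻ ω, hn (X ω) ^ (rr - 1) ∂P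
          = ∫⁻ ω, hn (X ω) ^ (rr - 1) * Z ω ∂Q := by
        rw [← hPZ, lintegral_withDensity_eq_lintegral_mul _ hZmeas
          (show Measurable fun ω => hn (X ω) ^ (rr - 1) from
            (hnmeas.pow_const _).comp hX)]
        exact lintegral_congr fun ω => (mul_comm _ _)
      have step4 : ∫⁻ ω, hn (X ω) ^ (rr - 1) * Z ω ∂Q
          ≤ (∫⁻ ω, hn (X ω) ^ ((rr - 1) * e) ∂Q) ^ (1 / e) * M ^ (1 / e') := by
        have := ENNReal.lintegral_mul_le_Lp_mul_Lq Q hconje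
          (f := fun ω => hn (X ω) ^ (rr - 1)) (g := Z)
          (((hnmeas.pow_const _).comp hX).aemeasurable) hZmeas.aemeasurable
        refine this.trans_eq ?_
        congr 1
        refine congrArg (· ^ (1 / e)) (lintegral_congr fun ω => ?_)
        rw [← ENNReal.rpow_mul]
      have step5 : ∫⁻ ω, hn (X ω) ^ ((rr - 1) * e) ∂Q ≤ I ^ (1 / r') * A := by
        have e2 : ∫⁻ ω, hn (X ω) ^ ((rr - 1) * e) ∂Q
            = ∫⁻ x, hn x ^ ((rr - 1) * e) ∂(Q.map X) :=
          (lintegral_map (hnmeas.pow_const _) hX).symm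
        rw [e2]
        refine (keyA _ (hnmeas.pow_const _)).trans_eq ?_
        congr 1
        refine congrArg (· ^ (1 / r')) (lintegral_congr fun x => ?_)
        rw [← ENNReal.rpow_mul, hkey1]
      calc I ≤ ∫⁻ x, hn x ^ (rr - 1) * h x ∂volume := step1
        _ = ∫⁻ ω, hn (X ω) ^ (rr - 1) * Z ω ∂Q := by rw [step2, step3]
        _ ≤ (∫⁻ ω, hn (X ω) ^ ((rr - 1) * e) ∂Q) ^ (1 / e) * M ^ (1 / e') := step4
        _ ≤ (I ^ (1 / r') * A) ^ (1 / e) * M ^ (1 / e') := by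
            exact mul_le_mul_left (ENNReal.rpow_le_rpow step5 (by positivity)) _
        _ = I ^ ((rr - 1) / rr) * B := by
            rw [ENNReal.mul_rpow_of_nonneg _ _ (by positivity : (0:ℝ) ≤ 1 / e),
              ← ENNReal.rpow_mul, hkey2, hBdef]
            ring
    -- conclude for the truncation
    have hfrac : (0:ℝ) ≤ (rr - 1) / rr := by positivity
    have hfrac1 : (rr - 1) / rr < 1 := by
      rw [div_lt_one hrr0]; linarith
    have := selfimp I B _ hIfin hfrac hfrac1 chain
    have h1rr : 1 - (rr - 1) / rr = 1 / rr := by field_simp; ring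
    rw [h1rr] at this
    have := ENNReal.rpow_le_rpow this (le_of_lt hrr0)
    rwa [← ENNReal.rpow_mul, one_div, inv_mul_cancel₀ (ne_of_gt hrr0),
      ENNReal.rpow_one] at this
  -- pass to the limit n → ∞
  have hsup : ∫⁻ x, h x ^ rr ∂volume ≤ B ^ rr := by
    have hmono : Monotone fun (n : ℕ) (x : Fin d → ℝ) => min (h x) n ^ rr :=
      fun m n hmn x => ENNReal.rpow_le_rpow
        (min_le_min le_rfl (by exact_mod_cast Nat.cast_le.2 hmn)) hrr0.le
    have hptsup : ∀ x, h x ^ rr = ⨆ n : ℕ, min (h x) n ^ rr := by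
      intro x
      refine le_antisymm ?_ (iSup_le fun n =>
        ENNReal.rpow_le_rpow (min_le_left _ _) hrr0.le)
      rcases eq_or_ne (h x) ⊤ with htop | hne
      · rw [htop, ENNReal.top_rpow_of_pos hrr0]
        have : ∀ n : ℕ, (n : ℝ≥0∞) ≤ min (⊤ : ℝ≥0∞) n ^ rr := by
          intro n
          rw [min_eq_right le_top]
          rcases Nat.eq_zero_or_pos n with h0 | h0
          · simp [h0]
          · calc (n : ℝ≥0∞) = (n : ℝ≥0∞) ^ (1:ℝ) := (ENNReal.rpow_one _).symm
              _ ≤ (n : ℝ≥0∞) ^ rr := ENNReal.rpow_le_rpow_of_exponent_le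
                  (by exact_mod_cast Nat.one_le_cast.2 h0) hrr1.le
        calc (⊤:ℝ≥0∞) = ⨆ n : ℕ, (n : ℝ≥0∞) := ENNReal.iSup_natCast.symm
          _ ≤ ⨆ n : ℕ, min (⊤ : ℝ≥0∞) n ^ rr := iSup_mono this
      · obtain ⟨n, hn⟩ := ENNReal.exists_nat_gt hne
        refine le_iSup_of_le n (le_of_eq ?_)
        rw [min_eq_left hn.le]
    calc ∫⁻ x, h x ^ rr ∂volume = ∫⁻ x, ⨆ n : ℕ, min (h x) n ^ rr ∂volume :=
          lintegral_congr hptsup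
      _ = ⨆ n : ℕ, ∫⁻ x, min (h x) n ^ rr ∂volume :=
          lintegral_iSup (fun n => (hhmeas.min measurable_const).pow_const _)
            (fun m n hmn => fun x => hmono hmn x)
      _ ≤ B ^ rr := iSup_le main
  -- conclude: eLpNorm bound
  have hfin : eLpNorm (fun x => (h x).toReal) (ENNReal.ofReal rr) volume
      ≤ (∫⁻ x, h x ^ rr ∂volume) ^ (1 / rr) := by
    rw [eLpNorm_eq_lintegral_rpow_enorm_toReal
      (by simp only [ne_eq, ENNReal.ofReal_eq_zero, not_le]; linarith)
      ENNReal.ofReal_ne_top, ENNReal.toReal_ofReal hrr0.le]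
    refine ENNReal.rpow_le_rpow (lintegral_mono fun x => ?_) (by positivity)
    refine ENNReal.rpow_le_rpow ?_ hrr0.le
    rw [← ofReal_norm_eq_enorm, Real.norm_of_nonneg ENNReal.toReal_nonneg]
    exact ENNReal.ofReal_toReal_le
  have hBle : (∫⁻ x, h x ^ rr ∂volume) ^ (1 / rr) ≤ B := by
    have := ENNReal.rpow_le_rpow hsup (by positivity : (0:ℝ) ≤ 1 / rr)
    rwa [← ENNReal.rpow_mul, mul_one_div, div_self (ne_of_gt hrr0),
      ENNReal.rpow_one] at this
  refine (hfin.trans hBle).trans_eq ?_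
  rw [hBdef, hexp1, hexp2, hexp3, hA_eq, hMdef]
  ring
end
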